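/- arXiv:1108.4007 — 2 statements merged into one kernel-verified Lean document; each statement's English description precedes it below -/
import Mathlib

section
/- Let X be a reduced ACM zero-dimensional subscheme of P^1 × P^1, let P_{i_1 j_1},…,P_{i_h j_h} ∈ X be interior points with pairwise distinct row indices i_1,…,i_h and pairwise distinct column indices j_1,…,j_h, and set Z_l = X \ {P_{i_1 j_1},…,P_{i_l j_l}} with q_l + 1 = #(X ∩ C_{j_l}), p_l + 1 = #(X ∩ R_{i_l}). Then for each l = 1,…,h−1: H_{Z_{l+1}}(i,j) = H_{Z_l}(i,j) if (i,j) is not ≥ (q_{l+1}, p_{l+1}) componentwise, and H_{Z_{l+1}}(i,j) = H_{Z_l}(i,j) − 1 if (i,j) ≥ (q_{l+1}, p_{l+1}). -/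
/- Common setup: the bigraded coordinate ring of Q = P^1 x P^1, bigraded Hilbert
functions, point ideals, separators, minimal free resolutions, staircase (Ferrers)
configurations of reduced ACM schemes. -/

open MvPolynomial

attribute [local instance] Classical.propDecidable

noncomputable section

/-- Variables of the bihomogeneous coordinate ring: `inl` = x₀,x₁ and `inr` = y₀,y₁. -/
abbrev BiVar := Fin 2 ⊕ Fin 2

/-- The bigraded coordinate ring S = k[x₀,x₁;y₀,y₁] of Q = P¹ × P¹. -/
abbrev S2 (k : Type) [Field k] := MvPolynomial BiVar k

/-- The bigrading weights: x-variables have degree (1,0), y-variables degree (0,1). -/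
def bw : BiVar → ℕ × ℕ := Sum.elim (fun _ => (1, 0)) (fun _ => (0, 1))

/-- P¹ over k. -/
abbrev P1 (k : Type) [Field k] := Projectivization k (Fin 2 → k)

/-- A point of Q = P¹ × P¹. -/
abbrev PtQ (k : Type) [Field k] := P1 k × P1 k

variable {k : Type} [Field k]

/-- Evaluation of a polynomial at (a representative of) a point of Q. -/
def evalPt (x : PtQ k) : S2 k →+* k :=
  MvPolynomial.eval (Sum.elim x.1.rep x.2.rep)

/-- An ideal is bihomogeneous if it contains all bihomogeneous components of its members. -/
def IsBihom (I : Ideal (S2 k)) : Prop :=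
  ∀ f ∈ I, ∀ d : ℕ × ℕ, weightedHomogeneousComponent bw d f ∈ I

/-- Saturation with respect to the irrelevant ideal (x₀,x₁) ∩ (y₀,y₁). -/
def IsSat (I : Ideal (S2 k)) : Prop :=
  ∀ f : S2 k, (∀ i j : Fin 2, X (Sum.inl i) * X (Sum.inr j) * f ∈ I) → f ∈ I

/-- The zero locus in Q of a (bihomogeneous) ideal. -/
def biZeroLocus (I : Ideal (S2 k)) : Set (PtQ k) :=
  {x | ∀ f ∈ I, ∀ d : ℕ × ℕ, evalPt x (weightedHomogeneousComponent bw d f) = 0}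

/-- The (saturated) ideal of a point of Q: generated by the bihomogeneous forms vanishing there. -/
def pointIdeal (x : PtQ k) : Ideal (S2 k) :=
  Ideal.span {f | (∃ d : ℕ × ℕ, IsWeightedHomogeneous bw f d) ∧ evalPt x f = 0}

/-- The saturated ideal of a reduced finite set of points of Q. -/
def idealOfFinset (Z : Finset (PtQ k)) : Ideal (S2 k) :=
  ⨅ x ∈ Z, pointIdeal x

/-- The bigraded piece of degree d of an ideal, as a k-subspace. -/
def Ipiece (I : Ideal (S2 k)) (d : ℕ × ℕ) : Submodule k (S2 k) :=
  (Submodule.restrictScalars k I) ⊓ weightedHomogeneousSubmodule k bw d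

/-- The bigraded Hilbert function M_X(i,j) = dim S_{i,j} - dim (I_X)_{i,j}. -/
def hilb (I : Ideal (S2 k)) (i j : ℕ) : ℕ :=
  Module.finrank k (weightedHomogeneousSubmodule k bw ((i, j) : ℕ × ℕ)) -
    Module.finrank k (Ipiece I (i, j))

/-- The Hilbert function extended by 0 to negative arguments. -/
def HM (I : Ideal (S2 k)) (i j : ℤ) : ℤ :=
  if 0 ≤ i ∧ 0 ≤ j then (hilb I i.toNat j.toNat : ℤ) else 0

/-- The first difference ΔM_X of the Hilbert function. -/
def ΔH (I : Ideal (S2 k)) (i j : ℤ) : ℤ :=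
  HM I i j - HM I (i - 1) j - HM I i (j - 1) + HM I (i - 1) (j - 1)

/-- Index of a nonzero coordinate of a nonzero vector in k². -/
def pivot (v : Fin 2 → k) : Fin 2 := if v 0 ≠ 0 then 0 else 1

/-- The other index. -/
def off : Fin 2 → Fin 2 := fun s => if s = 0 then 1 else 0

/-- Dehomogenization onto the affine chart around a point of Q. -/
def chartHom (x : PtQ k) : S2 k →+* MvPolynomial (Fin 2) k :=
  (aeval (R := k) (Sum.elim
    (fun i : Fin 2 => if i = pivot x.1.rep then 1 else X 0)
    (fun j : Fin 2 => if j = pivot x.2.rep then 1 else X 1))).toRingHom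

/-- The affine coordinates of a point of Q in its chart. -/
def affPt (x : PtQ k) : Fin 2 → k := fun u =>
  if u = 0 then x.1.rep (off (pivot x.1.rep)) / x.1.rep (pivot x.1.rep)
  else x.2.rep (off (pivot x.2.rep)) / x.2.rep (pivot x.2.rep)

/-- The multiplicity m_X(P): the length of the local ring O_{X,P}, computed in the
affine chart as the stable value of dim A/(I_aff + m_P^n). -/
def mult (I : Ideal (S2 k)) (x : PtQ k) : ℕ :=
  ⨆ n : ℕ, Module.finrank k
    (MvPolynomial (Fin 2) k ⧸
      (Ideal.map (chartHom x) I ⊔ (RingHom.ker (MvPolynomial.eval (affPt x))) ^ n))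

/-- X is arithmetically Cohen–Macaulay: depth S(X) = 2, i.e. there is a regular
sequence of length two on S/I_X inside the maximal ideal of S. -/
def IsACM (I : Ideal (S2 k)) : Prop :=
  ∃ f g : S2 k, constantCoeff f = 0 ∧ constantCoeff g = 0 ∧
    (∀ h : S2 k, f * h ∈ I → h ∈ I) ∧
    (∀ h : S2 k, g * h ∈ I ⊔ Ideal.span {f} → h ∈ I ⊔ Ideal.span {f})

/-- f is a separator of degree d for the point x relative to the residual scheme Z:
f is bihomogeneous of degree d, vanishes on Z, and is nonzero at x. -/
def IsSeparator (IZ : Ideal (S2 k)) (x : PtQ k) (f : S2 k) (d : ℕ × ℕ) : Prop :=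
  IsWeightedHomogeneous bw f d ∧ f ∈ IZ ∧ evalPt x f ≠ 0

/-- The set of separating degrees for x relative to Z. -/
def SepDegs (IZ : Ideal (S2 k)) (x : PtQ k) : Set (ℕ × ℕ) :=
  {d | ∃ f, IsSeparator IZ x f d}

/-- d is a minimal separating degree (componentwise partial order). -/
def IsMinSepDeg (IZ : Ideal (S2 k)) (x : PtQ k) (d : ℕ × ℕ) : Prop :=
  d ∈ SepDegs IZ x ∧ ∀ e ∈ SepDegs IZ x, ¬ e < d

/-- d is the unique minimal separating degree. -/
def UniqueMinSepDeg (IZ : Ideal (S2 k)) (x : PtQ k) (d : ℕ × ℕ) : Prop :=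
  IsMinSepDeg IZ x d ∧ ∀ e, IsMinSepDeg IZ x e → e = d

/-- f splits into a product of forms of degree (1,0) and (0,1), i.e. the curve f = 0
is a union of (1,0)- and (0,1)-lines. -/
def SplitsIntoLines (f : S2 k) : Prop :=
  ∃ L : Multiset (S2 k),
    (∀ l ∈ L, IsWeightedHomogeneous bw l ((1 : ℕ), (0 : ℕ)) ∨
      IsWeightedHomogeneous bw l ((0 : ℕ), (1 : ℕ))) ∧ f = L.prod

/-- `IsMFR3 I d0 d1 d2` : the ideal I has minimal bigraded free resolution
0 → ⊕ S(-d2 i) → ⊕ S(-d1 i) → ⊕ S(-d0 i) → I → 0, given by a minimal generating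
system of the listed degrees, a first-syzygy matrix A and a second-syzygy matrix B,
homogeneous of the appropriate degrees, with entries in the maximal ideal (minimality). -/
def IsMFR3 {ι₀ ι₁ ι₂ : Type} [Fintype ι₀] [Fintype ι₁] [Fintype ι₂]
    (I : Ideal (S2 k)) (d0 : ι₀ → ℕ × ℕ) (d1 : ι₁ → ℕ × ℕ) (d2 : ι₂ → ℕ × ℕ) : Prop :=
  ∃ (g : ι₀ → S2 k) (A : ι₁ → ι₀ → S2 k) (B : ι₂ → ι₁ → S2 k),
    (∀ i, IsWeightedHomogeneous bw (g i) (d0 i)) ∧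
    I = Ideal.span (Set.range g) ∧
    (∀ i j, A i j = 0 ∨ (d0 j ≤ d1 i ∧
      IsWeightedHomogeneous bw (A i j) ((d1 i).1 - (d0 j).1, (d1 i).2 - (d0 j).2))) ∧
    (∀ i j, constantCoeff (A i j) = 0) ∧
    (∀ i, ∑ j, A i j * g j = 0) ∧
    (∀ v : ι₀ → S2 k, ∑ j, v j * g j = 0 →
      ∃ c : ι₁ → S2 k, ∀ j, v j = ∑ i, c i * A i j) ∧
    (∀ i j, B i j = 0 ∨ (d1 j ≤ d2 i ∧
      IsWeightedHomogeneous bw (B i j) ((d2 i).1 - (d1 j).1, (d2 i).2 - (d1 j).2))) ∧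
    (∀ i j, constantCoeff (B i j) = 0) ∧
    (∀ i j, ∑ l, B i l * A l j = 0) ∧
    (∀ c : ι₁ → S2 k, (∀ j, ∑ i, c i * A i j = 0) →
      ∃ e : ι₂ → S2 k, ∀ i, c i = ∑ l, e l * B l i) ∧
    (∀ e : ι₂ → S2 k, (∀ i, ∑ l, e l * B l i = 0) → e = 0)

/-- A minimal free resolution of length 2 (the ACM case). -/
def IsMFR2 {ι₀ ι₁ : Type} [Fintype ι₀] [Fintype ι₁]
    (I : Ideal (S2 k)) (d0 : ι₀ → ℕ × ℕ) (d1 : ι₁ → ℕ × ℕ) : Prop :=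
  IsMFR3 I d0 d1 (fun e : Fin 0 => e.elim0)

/-- A reduced ACM zero-dimensional scheme in Q: points P_{ij} = R_i ∩ C_j indexed by a
lower-closed (staircase/Ferrers) diagram D in a grid of distinct (1,0)-lines R_i and
(0,1)-lines C_j, each containing at least one point of X. -/
structure Staircase (k : Type) [Field k] where
  a : ℕ
  b : ℕ
  R : ℕ → P1 k
  C : ℕ → P1 k
  hR : ∀ i ≤ a, ∀ i' ≤ a, R i = R i' → i = i'
  hC : ∀ j ≤ b, ∀ j' ≤ b, C j = C j' → j = j'
  D : Finset (ℕ × ℕ)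
  bound : ∀ p ∈ D, p.1 ≤ a ∧ p.2 ≤ b
  lower : ∀ p ∈ D, ∀ q : ℕ × ℕ, q.1 ≤ p.1 → q.2 ≤ p.2 → q ∈ D
  rows : ∀ i ≤ a, (i, 0) ∈ D
  cols : ∀ j ≤ b, (0, j) ∈ D

namespace Staircase

variable (T : Staircase k)

/-- The points of X. -/
def pts : Finset (PtQ k) := T.D.image (fun p => (T.R p.1, T.C p.2))

/-- The saturated ideal of X. -/
def ideal : Ideal (S2 k) := idealOfFinset T.pts

/-- #(X ∩ R_i). -/
def rowCount (i : ℕ) : ℕ := (T.D.filter (fun p => p.1 = i)).card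

/-- #(X ∩ C_j). -/
def colCount (j : ℕ) : ℕ := (T.D.filter (fun p => p.2 = j)).card

/-- (r,s) is a corner for X: P_{r-1,s}, P_{r,s-1} ∈ X but P_{r,s} ∉ X. -/
def IsCorner (r s : ℕ) : Prop :=
  0 < r ∧ 0 < s ∧ (r - 1, s) ∈ T.D ∧ (r, s - 1) ∈ T.D ∧ (r, s) ∉ T.D

/-- P_{ij} is an interior point of X: strictly dominated componentwise by some corner. -/
def Interior (i j : ℕ) : Prop :=
  (i, j) ∈ T.D ∧ ∃ r s, T.IsCorner r s ∧ i < r ∧ j < s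

/-- The saturated ideal of X minus the points of X indexed by E. -/
def residual (E : Finset (ℕ × ℕ)) : Ideal (S2 k) :=
  idealOfFinset ((T.D \ E).image (fun p => (T.R p.1, T.C p.2)))

end Staircase

/-- (i,j) is a vertex for a difference matrix c. -/
def IsVertexΔ (c : ℤ → ℤ → ℤ) (i j : ℤ) : Prop :=
  c (i - 1) j ≤ 0 ∧ c i (j - 1) ≤ 0 ∧ c (i - 1) (j - 1) = 1

/-- (i,j) is a corner for a difference matrix c. -/
def IsCornerΔ (c : ℤ → ℤ → ℤ) (i j : ℤ) : Prop :=
  c i j ≤ 0 ∧ c i (j - 1) = 1 ∧ c (i - 1) j = 1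

end

set_option maxHeartbeats 1000000
set_option synthInstance.maxHeartbeats 400000
set_option maxRecDepth 8000

noncomputable section Stmt13Aux

namespace Stmt13Aux

variable {k : Type} [Field k]

/-- cross product in k². -/
def cross (a b : Fin 2 → k) : k := a 0 * b 1 - a 1 * b 0

lemma vec_ne_zero_iff (u : Fin 2 → k) : u ≠ 0 ↔ u 0 ≠ 0 ∨ u 1 ≠ 0 := by
  constructor
  · intro h
    by_contra hc
    push_neg at hc
    apply h
    funext s
    fin_cases s <;> simp [hc.1, hc.2]
  · rintro (h | h) hc <;> simp [hc] at h

lemma mk_eq_mk_of_cross {u v : Fin 2 → k} (hu : u ≠ 0) (hv : v ≠ 0)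
    (h : cross u v = 0) : Projectivization.mk k u hu = Projectivization.mk k v hv := by
  rw [Projectivization.mk_eq_mk_iff]
  unfold cross at h
  rcases (vec_ne_zero_iff v).1 hv with h0 | h1
  · have hne : u 0 ≠ 0 := by
      intro hz
      apply hu
      have h1' : u 1 = 0 := by
        have hz2 : u 1 * v 0 = 0 := by linear_combination -h + v 1 * hz
        exact (mul_eq_zero.1 hz2).resolve_right h0
      funext s; fin_cases s
      · exact hz
      · exact h1'
    refine ⟨Units.mk0 (u 0 / v 0) (div_ne_zero hne h0), funext fun s => ?_⟩
    have hs : ∀ t : Fin 2,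
        (Units.mk0 (u 0 / v 0) (div_ne_zero hne h0) • v) t = u 0 / v 0 * v t := by
      intro t; simp [Units.smul_def]
    fin_cases s
    · rw [hs]; exact div_mul_cancel₀ (u 0) h0
    · simp only [Fin.mk_one, Fin.zero_eta]; rw [hs]; field_simp; linear_combination h
  · have hne : u 1 ≠ 0 := by
      intro hz
      apply hu
      have h0' : u 0 = 0 := by
        have hz2 : u 0 * v 1 = 0 := by linear_combination h + v 0 * hz
        exact (mul_eq_zero.1 hz2).resolve_right h1
      funext s; fin_cases s
      · exact h0'
      · exact hz
    refine ⟨Units.mk0 (u 1 / v 1) (div_ne_zero hne h1), funext fun s => ?_⟩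
    have hs : ∀ t : Fin 2,
        (Units.mk0 (u 1 / v 1) (div_ne_zero hne h1) • v) t = u 1 / v 1 * v t := by
      intro t; simp [Units.smul_def]
    fin_cases s
    · simp only [Fin.mk_one, Fin.zero_eta]; rw [hs]; field_simp; linear_combination -h
    · rw [hs]; exact div_mul_cancel₀ (u 1) h1

/-- Evaluation at a point as a linear map. -/
def evalLin (x : PtQ k) : S2 k →ₗ[k] k :=
  (MvPolynomial.aeval (Sum.elim x.1.rep x.2.rep) : S2 k →ₐ[k] k).toLinearMap

lemma evalLin_apply (x : PtQ k) (f : S2 k) : evalLin x f = evalPt x f :=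
  RingHom.congr_fun (MvPolynomial.coe_aeval_eq_eval _) f

/-- Forms vanishing on a finite set of points. -/
def vanish (Z : Finset (PtQ k)) : Submodule k (S2 k) :=
  ⨅ x ∈ Z, LinearMap.ker (evalLin x)

lemma mem_vanish {Z : Finset (PtQ k)} {f : S2 k} :
    f ∈ vanish Z ↔ ∀ x ∈ Z, evalPt x f = 0 := by
  simp [vanish, Submodule.mem_iInf, LinearMap.mem_ker, evalLin_apply]

lemma evalPt_eq_zero_of_mem {x : PtQ k} {f : S2 k} (h : f ∈ pointIdeal x) :
    evalPt x f = 0 := by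
  have hle : pointIdeal x ≤ RingHom.ker (evalPt x) :=
    Ideal.span_le.2 (fun g hg => hg.2)
  exact hle h

lemma mem_pointIdeal_of {x : PtQ k} {f : S2 k} {d : ℕ × ℕ}
    (hf : MvPolynomial.IsWeightedHomogeneous bw f d) (h : evalPt x f = 0) :
    f ∈ pointIdeal x :=
  Ideal.subset_span ⟨⟨d, hf⟩, h⟩

lemma Ipiece_eq (Z : Finset (PtQ k)) (d : ℕ × ℕ) :
    Ipiece (idealOfFinset Z) d = (weightedHomogeneousSubmodule k bw d) ⊓ vanish Z := by
  ext f
  simp only [Ipiece, Submodule.mem_inf, Submodule.restrictScalars_mem, mem_vanish,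
    idealOfFinset, Ideal.mem_iInf]
  constructor
  · rintro ⟨hI, hh⟩
    exact ⟨hh, fun x hx => evalPt_eq_zero_of_mem (hI x hx)⟩
  · rintro ⟨hh, hv⟩
    exact ⟨fun x hx => mem_pointIdeal_of
      ((mem_weightedHomogeneousSubmodule k bw d f).1 hh) (hv x hx), hh⟩

lemma weight_bw (m : BiVar →₀ ℕ) :
    Finsupp.weight bw m =
      ((m (Sum.inl 0) + m (Sum.inl 1), m (Sum.inr 0) + m (Sum.inr 1)) : ℕ × ℕ) := by
  rw [Finsupp.weight_apply, Finsupp.sum_fintype _ _ (by intro s; simp)]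
  rw [Fintype.sum_sum_type]
  simp [bw, Fin.sum_univ_two, Prod.ext_iff]

instance FD_whs (d : ℕ × ℕ) :
    FiniteDimensional k (weightedHomogeneousSubmodule k bw d) := by
  apply Submodule.finiteDimensional_of_le
    (S₂ := MvPolynomial.restrictTotalDegree BiVar k (d.1 + d.2))
  intro f hf
  rw [MvPolynomial.mem_restrictTotalDegree]
  apply Finset.sup_le
  intro m hm
  have hw := (mem_weightedHomogeneousSubmodule k bw d f).1 hf
    (MvPolynomial.mem_support_iff.1 hm)
  rw [weight_bw] at hw
  have h1 : m (Sum.inl 0) + m (Sum.inl 1) = d.1 := congrArg Prod.fst hw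
  have h2 : m (Sum.inr 0) + m (Sum.inr 1) = d.2 := congrArg Prod.snd hw
  have : (m.sum fun _ e => e) = m (Sum.inl 0) + m (Sum.inl 1) +
      (m (Sum.inr 0) + m (Sum.inr 1)) := by
    rw [Finsupp.sum_fintype _ _ (by intro s; simp), Fintype.sum_sum_type]
    simp [Fin.sum_univ_two]
  omega

/-- The key dimension-count: removing one point changes the Hilbert function
according to the (non)existence of a separator of the given degree. -/
lemma hilb_insert (Z : Finset (PtQ k)) (P : PtQ k) (i j : ℕ) :
    ((∃ f, MvPolynomial.IsWeightedHomogeneous bw f ((i, j) : ℕ × ℕ) ∧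
        (∀ x ∈ Z, evalPt x f = 0) ∧ evalPt P f ≠ 0) →
      (hilb (idealOfFinset Z) i j : ℤ) = (hilb (idealOfFinset (insert P Z)) i j : ℤ) - 1) ∧
    ((∀ f, MvPolynomial.IsWeightedHomogeneous bw f ((i, j) : ℕ × ℕ) →
        (∀ x ∈ Z, evalPt x f = 0) → evalPt P f = 0) →
      hilb (idealOfFinset Z) i j = hilb (idealOfFinset (insert P Z)) i j) := by
  classical
  set V := weightedHomogeneousSubmodule k bw ((i, j) : ℕ × ℕ) with hV
  set K' := V ⊓ vanish Z with hK'd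
  set K := V ⊓ vanish (insert P Z) with hKd
  have hKK' : K = K' ⊓ LinearMap.ker (evalLin P) := by
    ext f
    simp only [hKd, hK'd, Submodule.mem_inf, mem_vanish, Finset.mem_insert,
      LinearMap.mem_ker, evalLin_apply]
    constructor
    · rintro ⟨h1, h2⟩
      exact ⟨⟨h1, fun x hx => h2 x (Or.inr hx)⟩, h2 P (Or.inl rfl)⟩
    · rintro ⟨⟨h1, h2⟩, h3⟩
      refine ⟨h1, fun x hx => ?_⟩
      rcases hx with rfl | hx
      · exact h3
      · exact h2 x hx
  have hK'V : K' ≤ V := inf_le_left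
  have hKK'le : K ≤ K' := by rw [hKK']; exact inf_le_left
  haveI : FiniteDimensional k K' := Submodule.finiteDimensional_of_le hK'V
  haveI : FiniteDimensional k K := Submodule.finiteDimensional_of_le (hKK'le.trans hK'V)
  have hilbZ : hilb (idealOfFinset Z) i j = Module.finrank k V - Module.finrank k K' := by
    rw [hilb, Ipiece_eq]
  have hilbZ' : hilb (idealOfFinset (insert P Z)) i j
      = Module.finrank k V - Module.finrank k K := by
    rw [hilb, Ipiece_eq]
  have hle1 : Module.finrank k K' ≤ Module.finrank k V := Submodule.finrank_mono hK'V
  constructor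
  · rintro ⟨f, hf1, hf2, hf3⟩
    have hfK' : f ∈ K' := by
      refine ⟨(mem_weightedHomogeneousSubmodule k bw _ f).2 hf1, mem_vanish.2 hf2⟩
    -- the evaluation map on K' is onto k with kernel K
    set ℓ : K' →ₗ[k] k := (evalLin P).comp K'.subtype with hℓ
    have hker : LinearMap.ker ℓ = Submodule.comap K'.subtype K := by
      ext g
      simp only [LinearMap.mem_ker, hℓ, LinearMap.comp_apply, Submodule.mem_comap,
        Submodule.subtype_apply, hKK', Submodule.mem_inf, LinearMap.mem_ker]
      exact ⟨fun hz => ⟨g.2, hz⟩, fun hz => hz.2⟩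
    have hrange : LinearMap.range ℓ = ⊤ := by
      rw [eq_top_iff]
      intro y _
      refine ⟨(y * (evalLin P f)⁻¹) • ⟨f, hfK'⟩, ?_⟩
      have hne : evalLin P f ≠ 0 := by rw [evalLin_apply]; exact hf3
      simp only [map_smul, hℓ, LinearMap.comp_apply, Submodule.subtype_apply]
      simp only [smul_eq_mul]; field_simp
    have hrk := LinearMap.finrank_range_add_finrank_ker ℓ
    rw [hrange, hker] at hrk
    have h1 : Module.finrank k (⊤ : Submodule k k) = 1 := by
      rw [finrank_top]; exact Module.finrank_self k
    have h2 : Module.finrank k (Submodule.comap K'.subtype K) = Module.finrank k K :=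
      (Submodule.comapSubtypeEquivOfLe hKK'le).finrank_eq
    rw [h1, h2] at hrk
    rw [hilbZ, hilbZ']
    omega
  · intro hno
    have hKeq : K = K' := by
      refine le_antisymm hKK'le ?_
      intro f hf
      rw [hKK']
      refine ⟨hf, ?_⟩
      have hz : evalLin P f = 0 := by
        rw [evalLin_apply]
        exact hno f ((mem_weightedHomogeneousSubmodule k bw _ f).1 hf.1) (mem_vanish.1 hf.2)
      exact LinearMap.mem_ker.2 hz
    rw [hilbZ, hilbZ', hKeq]

lemma polyeval_aeval (g : BiVar → Polynomial k) (t : k) (f : S2 k) :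
    Polynomial.eval t (MvPolynomial.aeval g f) =
      MvPolynomial.eval (fun s => Polynomial.eval t (g s)) f := by
  induction f using MvPolynomial.induction_on with
  | C a => simp
  | add p q hp hq => simp [hp, hq]
  | mul_X p s hp => simp [hp]

lemma eval_scalex {f : S2 k} {i j : ℕ}
    (hf : MvPolynomial.IsWeightedHomogeneous bw f ((i, j) : ℕ × ℕ))
    (α : k) (u c : Fin 2 → k) :
    MvPolynomial.eval (Sum.elim (fun s => α * u s) c) f
      = α ^ i * MvPolynomial.eval (Sum.elim u c) f := by
  conv_lhs => rw [← MvPolynomial.support_sum_monomial_coeff f]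
  conv_rhs => rw [← MvPolynomial.support_sum_monomial_coeff f]
  rw [map_sum, map_sum, Finset.mul_sum]
  apply Finset.sum_congr rfl
  intro m hm
  have hw := hf (MvPolynomial.mem_support_iff.1 hm)
  rw [weight_bw] at hw
  have h1 : m (Sum.inl 0) + m (Sum.inl 1) = i := congrArg Prod.fst hw
  rw [MvPolynomial.eval_monomial, MvPolynomial.eval_monomial]
  rw [Finsupp.prod_fintype _ _ (fun s => pow_zero _),
    Finsupp.prod_fintype _ _ (fun s => pow_zero _)]
  rw [Fintype.prod_sum_type, Fintype.prod_sum_type]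
  simp only [Sum.elim_inl, Sum.elim_inr]
  simp only [Fin.prod_univ_two, mul_pow]
  rw [← h1]
  ring

lemma eval_scaley {f : S2 k} {i j : ℕ}
    (hf : MvPolynomial.IsWeightedHomogeneous bw f ((i, j) : ℕ × ℕ))
    (α : k) (u c : Fin 2 → k) :
    MvPolynomial.eval (Sum.elim c (fun s => α * u s)) f
      = α ^ j * MvPolynomial.eval (Sum.elim c u) f := by
  conv_lhs => rw [← MvPolynomial.support_sum_monomial_coeff f]
  conv_rhs => rw [← MvPolynomial.support_sum_monomial_coeff f]
  rw [map_sum, map_sum, Finset.mul_sum]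
  apply Finset.sum_congr rfl
  intro m hm
  have hw := hf (MvPolynomial.mem_support_iff.1 hm)
  rw [weight_bw] at hw
  have h1 : m (Sum.inr 0) + m (Sum.inr 1) = j := congrArg Prod.snd hw
  rw [MvPolynomial.eval_monomial, MvPolynomial.eval_monomial]
  rw [Finsupp.prod_fintype _ _ (fun s => pow_zero _),
    Finsupp.prod_fintype _ _ (fun s => pow_zero _)]
  rw [Fintype.prod_sum_type, Fintype.prod_sum_type]
  simp only [Sum.elim_inl, Sum.elim_inr]
  simp only [Fin.prod_univ_two, mul_pow]
  rw [← h1]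
  ring

lemma natDegree_aeval_le_x {f : S2 k} {i j : ℕ}
    (hf : MvPolynomial.IsWeightedHomogeneous bw f ((i, j) : ℕ × ℕ))
    (g : BiVar → Polynomial k)
    (hg1 : ∀ s : Fin 2, (g (Sum.inl s)).natDegree ≤ 1)
    (hg2 : ∀ s : Fin 2, (g (Sum.inr s)).natDegree = 0) :
    (MvPolynomial.aeval g f).natDegree ≤ i := by
  conv_lhs => rw [← MvPolynomial.support_sum_monomial_coeff f]
  rw [map_sum]
  apply Polynomial.natDegree_sum_le_of_forall_le
  intro m hm
  have hw := hf (MvPolynomial.mem_support_iff.1 hm)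
  rw [weight_bw] at hw
  have h1 : m (Sum.inl 0) + m (Sum.inl 1) = i := congrArg Prod.fst hw
  rw [MvPolynomial.aeval_monomial]
  apply le_trans (Polynomial.natDegree_mul_le)
  have hC : (algebraMap k (Polynomial k) (MvPolynomial.coeff m f)).natDegree = 0 := by
    simp [Polynomial.algebraMap_eq]
  rw [hC, zero_add]
  rw [Finsupp.prod_fintype _ _ (fun s => pow_zero _), Fintype.prod_sum_type]
  apply le_trans (Polynomial.natDegree_mul_le)
  have hA : (∏ s : Fin 2, g (Sum.inl s) ^ m (Sum.inl s)).natDegree ≤ i := by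
    apply le_trans (Polynomial.natDegree_prod_le _ _)
    calc ∑ s : Fin 2, (g (Sum.inl s) ^ m (Sum.inl s)).natDegree
        ≤ ∑ s : Fin 2, m (Sum.inl s) := by
          apply Finset.sum_le_sum
          intro s _
          refine le_trans Polynomial.natDegree_pow_le ?_
          calc m (Sum.inl s) * (g (Sum.inl s)).natDegree
              ≤ m (Sum.inl s) * 1 := Nat.mul_le_mul_left _ (hg1 s)
            _ = m (Sum.inl s) := Nat.mul_one _
      _ = i := by rw [Fin.sum_univ_two]; exact h1
  have hB : (∏ s : Fin 2, g (Sum.inr s) ^ m (Sum.inr s)).natDegree ≤ 0 := by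
    refine le_trans (Polynomial.natDegree_prod_le _ _) (le_of_eq ?_)
    apply Finset.sum_eq_zero
    intro s _
    have hpl := Polynomial.natDegree_pow_le (p := g (Sum.inr s)) (n := m (Sum.inr s))
    rw [hg2 s, Nat.mul_zero] at hpl
    omega
  omega

lemma natDegree_aeval_le_y {f : S2 k} {i j : ℕ}
    (hf : MvPolynomial.IsWeightedHomogeneous bw f ((i, j) : ℕ × ℕ))
    (g : BiVar → Polynomial k)
    (hg1 : ∀ s : Fin 2, (g (Sum.inr s)).natDegree ≤ 1)
    (hg2 : ∀ s : Fin 2, (g (Sum.inl s)).natDegree = 0) :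
    (MvPolynomial.aeval g f).natDegree ≤ j := by
  conv_lhs => rw [← MvPolynomial.support_sum_monomial_coeff f]
  rw [map_sum]
  apply Polynomial.natDegree_sum_le_of_forall_le
  intro m hm
  have hw := hf (MvPolynomial.mem_support_iff.1 hm)
  rw [weight_bw] at hw
  have h1 : m (Sum.inr 0) + m (Sum.inr 1) = j := congrArg Prod.snd hw
  rw [MvPolynomial.aeval_monomial]
  apply le_trans (Polynomial.natDegree_mul_le)
  have hC : (algebraMap k (Polynomial k) (MvPolynomial.coeff m f)).natDegree = 0 := by
    simp [Polynomial.algebraMap_eq]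
  rw [hC, zero_add]
  rw [Finsupp.prod_fintype _ _ (fun s => pow_zero _), Fintype.prod_sum_type]
  apply le_trans (Polynomial.natDegree_mul_le)
  have hA : (∏ s : Fin 2, g (Sum.inr s) ^ m (Sum.inr s)).natDegree ≤ j := by
    apply le_trans (Polynomial.natDegree_prod_le _ _)
    calc ∑ s : Fin 2, (g (Sum.inr s) ^ m (Sum.inr s)).natDegree
        ≤ ∑ s : Fin 2, m (Sum.inr s) := by
          apply Finset.sum_le_sum
          intro s _
          refine le_trans Polynomial.natDegree_pow_le ?_
          calc m (Sum.inr s) * (g (Sum.inr s)).natDegree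
              ≤ m (Sum.inr s) * 1 := Nat.mul_le_mul_left _ (hg1 s)
            _ = m (Sum.inr s) := Nat.mul_one _
      _ = j := by rw [Fin.sum_univ_two]; exact h1
  have hB : (∏ s : Fin 2, g (Sum.inl s) ^ m (Sum.inl s)).natDegree ≤ 0 := by
    refine le_trans (Polynomial.natDegree_prod_le _ _) (le_of_eq ?_)
    apply Finset.sum_eq_zero
    intro s _
    have hpl := Polynomial.natDegree_pow_le (p := g (Sum.inl s)) (n := m (Sum.inl s))
    rw [hg2 s, Nat.mul_zero] at hpl
    omega
  omega

/-- A form whose x-degree is less than the number of (pairwise nonproportional)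
points sharing a common y-coordinate on which it vanishes, vanishes at any further
x-coordinate over the same y-coordinate. -/
lemma no_sep_col [Infinite k] {f : S2 k} {i j n : ℕ}
    (hf : MvPolynomial.IsWeightedHomogeneous bw f ((i, j) : ℕ × ℕ)) (hi : i < n)
    (v : Fin 2 → k) (hv : v ≠ 0) (c : Fin 2 → k)
    (u : Fin n → Fin 2 → k) (hu : ∀ r, u r ≠ 0)
    (hcr : ∀ r r', r ≠ r' → cross (u r) (u r') ≠ 0)
    (h0 : ∀ r, MvPolynomial.eval (Sum.elim (u r) c) f = 0) :
    MvPolynomial.eval (Sum.elim v c) f = 0 := by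
  classical
  obtain ⟨z, hz⟩ := Infinite.exists_notMem_finset
    ((Finset.univ.image (fun r => u r 1 / u r 0)) ∪ {v 1 / v 0})
  set w : Fin 2 → k := fun s => if s = 0 then 1 else z with hwdef
  have hw0 : w 0 = 1 := rfl
  have hw1 : w 1 = z := rfl
  have hwcross : ∀ x : Fin 2 → k, x ≠ 0 → x 1 / x 0 ≠ z → cross x w ≠ 0 := by
    intro x hx hxz hc
    rw [cross, hw0, hw1, mul_one] at hc
    rcases eq_or_ne (x 0) 0 with h00 | h00
    · have hx1 : x 1 ≠ 0 := by
        rcases (vec_ne_zero_iff x).1 hx with hh | hh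
        · exact absurd h00 hh
        · exact hh
      exact hx1 (by linear_combination -hc + z * h00)
    · apply hxz
      field_simp
      linear_combination -hc
  have hD0 : cross v w ≠ 0 := by
    apply hwcross v hv
    intro hc
    exact hz (Finset.mem_union_right _ (by simp [hc]))
  have hαne : ∀ r, cross (u r) w ≠ 0 := by
    intro r
    apply hwcross (u r) (hu r)
    intro hc
    exact hz (Finset.mem_union_left _ (Finset.mem_image.2 ⟨r, Finset.mem_univ r, hc⟩))
  set α : Fin n → k := fun r => cross (u r) w / cross v w with hαdef
  set β : Fin n → k := fun r => cross v (u r) / cross v w with hβdef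
  set t : Fin n → k := fun r => β r / α r with htdef
  have hα : ∀ r, α r ≠ 0 := fun r => div_ne_zero (hαne r) hD0
  have hαt : ∀ r, α r * t r = β r := by
    intro r
    simp only [htdef]
    exact mul_div_cancel₀ _ (hα r)
  have hid : ∀ r (s : Fin 2), cross (u r) w * v s + cross v (u r) * w s
      = u r s * cross v w := by
    intro r
    rw [Fin.forall_fin_two]
    constructor <;> (simp only [cross]; ring)
  have hdec : ∀ r (s : Fin 2), u r s = α r * (v s + w s * t r) := by
    intro r s
    have e1 : α r * (v s + w s * t r) = α r * v s + α r * t r * w s := by ring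
    rw [e1, hαt r]
    simp only [hαdef, hβdef]
    rw [div_mul_eq_mul_div, div_mul_eq_mul_div, ← add_div, hid r s]
    exact (mul_div_cancel_right₀ _ hD0).symm
  set g : BiVar → Polynomial k := Sum.elim
    (fun s => Polynomial.C (v s) + Polynomial.C (w s) * Polynomial.X)
    (fun s => Polynomial.C (c s)) with hgdef
  have heval : ∀ τ : k, Polynomial.eval τ (MvPolynomial.aeval g f)
      = MvPolynomial.eval (Sum.elim (fun s => v s + w s * τ) c) f := by
    intro τ
    rw [polyeval_aeval]
    have hpt : (fun s => Polynomial.eval τ (g s))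
        = Sum.elim (fun s => v s + w s * τ) c := by
      funext s
      rcases s with s | s <;> simp [hgdef]
    rw [hpt]
  have hdeg : (MvPolynomial.aeval g f).natDegree ≤ i := by
    apply natDegree_aeval_le_x hf g
    · intro s
      have h1 : (Polynomial.C (v s) : Polynomial k).natDegree ≤ 1 := by simp
      have h2 : (Polynomial.C (w s) * Polynomial.X : Polynomial k).natDegree ≤ 1 :=
        le_trans (Polynomial.natDegree_C_mul_le _ _) (le_of_eq Polynomial.natDegree_X)
      simpa [hgdef] using le_trans (Polynomial.natDegree_add_le _ _) (max_le h1 h2)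
    · intro s
      simp [hgdef]
  have hroots : ∀ r, Polynomial.eval (t r) (MvPolynomial.aeval g f) = 0 := by
    intro r
    rw [heval]
    have husv : (Sum.elim (u r) c : BiVar → k)
        = Sum.elim (fun s => α r * (v s + w s * t r)) c := by
      have hu' : u r = fun s => α r * (v s + w s * t r) := funext (hdec r)
      rw [hu']
    have h2 := eval_scalex hf (α r) (fun s => v s + w s * t r) c
    rw [← husv, h0 r] at h2
    rcases mul_eq_zero.1 h2.symm with h3 | h3
    · exact absurd h3 (pow_ne_zero i (hα r))
    · exact h3
  have htinj : Function.Injective t := by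
    intro r r' hrr
    by_contra hne
    apply hcr r r' hne
    have e0 := hdec r 0
    have e1 := hdec r 1
    have e0' := hdec r' 0
    have e1' := hdec r' 1
    rw [hrr] at e0 e1
    rw [cross, e0, e1, e0', e1']
    ring
  have hzero : MvPolynomial.aeval g f = 0 := by
    apply Polynomial.eq_zero_of_natDegree_lt_card_of_eval_eq_zero _ htinj hroots
    rw [Fintype.card_fin]
    omega
  have hfin := heval 0
  rw [hzero] at hfin
  simp only [Polynomial.eval_zero, mul_zero, add_zero] at hfin
  exact hfin.symm

/-- Mirror of `no_sep_col` for the second factor. -/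
lemma no_sep_row [Infinite k] {f : S2 k} {i j n : ℕ}
    (hf : MvPolynomial.IsWeightedHomogeneous bw f ((i, j) : ℕ × ℕ)) (hj : j < n)
    (v : Fin 2 → k) (hv : v ≠ 0) (c : Fin 2 → k)
    (u : Fin n → Fin 2 → k) (hu : ∀ r, u r ≠ 0)
    (hcr : ∀ r r', r ≠ r' → cross (u r) (u r') ≠ 0)
    (h0 : ∀ r, MvPolynomial.eval (Sum.elim c (u r)) f = 0) :
    MvPolynomial.eval (Sum.elim c v) f = 0 := by
  classical
  obtain ⟨z, hz⟩ := Infinite.exists_notMem_finset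
    ((Finset.univ.image (fun r => u r 1 / u r 0)) ∪ {v 1 / v 0})
  set w : Fin 2 → k := fun s => if s = 0 then 1 else z with hwdef
  have hw0 : w 0 = 1 := rfl
  have hw1 : w 1 = z := rfl
  have hwcross : ∀ x : Fin 2 → k, x ≠ 0 → x 1 / x 0 ≠ z → cross x w ≠ 0 := by
    intro x hx hxz hc
    rw [cross, hw0, hw1, mul_one] at hc
    rcases eq_or_ne (x 0) 0 with h00 | h00
    · have hx1 : x 1 ≠ 0 := by
        rcases (vec_ne_zero_iff x).1 hx with hh | hh
        · exact absurd h00 hh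
        · exact hh
      exact hx1 (by linear_combination -hc + z * h00)
    · apply hxz
      field_simp
      linear_combination -hc
  have hD0 : cross v w ≠ 0 := by
    apply hwcross v hv
    intro hc
    exact hz (Finset.mem_union_right _ (by simp [hc]))
  have hαne : ∀ r, cross (u r) w ≠ 0 := by
    intro r
    apply hwcross (u r) (hu r)
    intro hc
    exact hz (Finset.mem_union_left _ (Finset.mem_image.2 ⟨r, Finset.mem_univ r, hc⟩))
  set α : Fin n → k := fun r => cross (u r) w / cross v w with hαdef
  set β : Fin n → k := fun r => cross v (u r) / cross v w with hβdef
  set t : Fin n → k := fun r => β r / α r with htdef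
  have hα : ∀ r, α r ≠ 0 := fun r => div_ne_zero (hαne r) hD0
  have hαt : ∀ r, α r * t r = β r := by
    intro r
    simp only [htdef]
    exact mul_div_cancel₀ _ (hα r)
  have hid : ∀ r (s : Fin 2), cross (u r) w * v s + cross v (u r) * w s
      = u r s * cross v w := by
    intro r
    rw [Fin.forall_fin_two]
    constructor <;> (simp only [cross]; ring)
  have hdec : ∀ r (s : Fin 2), u r s = α r * (v s + w s * t r) := by
    intro r s
    have e1 : α r * (v s + w s * t r) = α r * v s + α r * t r * w s := by ring
    rw [e1, hαt r]
    simp only [hαdef, hβdef]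
    rw [div_mul_eq_mul_div, div_mul_eq_mul_div, ← add_div, hid r s]
    exact (mul_div_cancel_right₀ _ hD0).symm
  set g : BiVar → Polynomial k := Sum.elim
    (fun s => Polynomial.C (c s))
    (fun s => Polynomial.C (v s) + Polynomial.C (w s) * Polynomial.X) with hgdef
  have heval : ∀ τ : k, Polynomial.eval τ (MvPolynomial.aeval g f)
      = MvPolynomial.eval (Sum.elim c (fun s => v s + w s * τ)) f := by
    intro τ
    rw [polyeval_aeval]
    have hpt : (fun s => Polynomial.eval τ (g s))
        = Sum.elim c (fun s => v s + w s * τ) := by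
      funext s
      rcases s with s | s <;> simp [hgdef]
    rw [hpt]
  have hdeg : (MvPolynomial.aeval g f).natDegree ≤ j := by
    apply natDegree_aeval_le_y hf g
    · intro s
      have h1 : (Polynomial.C (v s) : Polynomial k).natDegree ≤ 1 := by simp
      have h2 : (Polynomial.C (w s) * Polynomial.X : Polynomial k).natDegree ≤ 1 :=
        le_trans (Polynomial.natDegree_C_mul_le _ _) (le_of_eq Polynomial.natDegree_X)
      simpa [hgdef] using le_trans (Polynomial.natDegree_add_le _ _) (max_le h1 h2)
    · intro s
      simp [hgdef]
  have hroots : ∀ r, Polynomial.eval (t r) (MvPolynomial.aeval g f) = 0 := by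
    intro r
    rw [heval]
    have husv : (Sum.elim c (u r) : BiVar → k)
        = Sum.elim c (fun s => α r * (v s + w s * t r)) := by
      have hu' : u r = fun s => α r * (v s + w s * t r) := funext (hdec r)
      rw [hu']
    have h2 := eval_scaley hf (α r) (fun s => v s + w s * t r) c
    rw [← husv, h0 r] at h2
    rcases mul_eq_zero.1 h2.symm with h3 | h3
    · exact absurd h3 (pow_ne_zero j (hα r))
    · exact h3
  have htinj : Function.Injective t := by
    intro r r' hrr
    by_contra hne
    apply hcr r r' hne
    have e0 := hdec r 0
    have e1 := hdec r 1
    have e0' := hdec r' 0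
    have e1' := hdec r' 1
    rw [hrr] at e0 e1
    rw [cross, e0, e1, e0', e1']
    ring
  have hzero : MvPolynomial.aeval g f = 0 := by
    apply Polynomial.eq_zero_of_natDegree_lt_card_of_eval_eq_zero _ htinj hroots
    rw [Fintype.card_fin]
    omega
  have hfin := heval 0
  rw [hzero] at hfin
  simp only [Polynomial.eval_zero, mul_zero, add_zero] at hfin
  exact hfin.symm

/-- A (1,0)-form vanishing exactly on the horizontal ruling through a given vector. -/
def Lx (v : Fin 2 → k) : S2 k :=
  MvPolynomial.C (v 1) * MvPolynomial.X (Sum.inl 0) -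
    MvPolynomial.C (v 0) * MvPolynomial.X (Sum.inl 1)

/-- A (0,1)-form vanishing exactly on the vertical ruling through a given vector. -/
def Ly (v : Fin 2 → k) : S2 k :=
  MvPolynomial.C (v 1) * MvPolynomial.X (Sum.inr 0) -
    MvPolynomial.C (v 0) * MvPolynomial.X (Sum.inr 1)

lemma evalPt_Lx (x : PtQ k) (v : Fin 2 → k) : evalPt x (Lx v) = cross x.1.rep v := by
  simp only [Lx, evalPt, cross, map_sub, map_mul, MvPolynomial.eval_C, MvPolynomial.eval_X,
    Sum.elim_inl]
  ring

lemma evalPt_Ly (x : PtQ k) (v : Fin 2 → k) : evalPt x (Ly v) = cross x.2.rep v := by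
  simp only [Ly, evalPt, cross, map_sub, map_mul, MvPolynomial.eval_C, MvPolynomial.eval_X,
    Sum.elim_inr]
  ring

lemma evalPt_X_inl (x : PtQ k) (s : Fin 2) :
    evalPt x (MvPolynomial.X (Sum.inl s)) = x.1.rep s := by
  simp [evalPt]

lemma evalPt_X_inr (x : PtQ k) (s : Fin 2) :
    evalPt x (MvPolynomial.X (Sum.inr s)) = x.2.rep s := by
  simp [evalPt]

lemma Lx_hom (v : Fin 2 → k) :
    MvPolynomial.IsWeightedHomogeneous bw (Lx v) (((1 : ℕ), (0 : ℕ)) : ℕ × ℕ) := by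
  have h0 : MvPolynomial.IsWeightedHomogeneous bw
      (MvPolynomial.X (Sum.inl 0) : S2 k) ((1, 0) : ℕ × ℕ) :=
    MvPolynomial.isWeightedHomogeneous_X k bw (Sum.inl 0)
  have h1 : MvPolynomial.IsWeightedHomogeneous bw
      (MvPolynomial.X (Sum.inl 1) : S2 k) ((1, 0) : ℕ × ℕ) :=
    MvPolynomial.isWeightedHomogeneous_X k bw (Sum.inl 1)
  rw [← mem_weightedHomogeneousSubmodule] at h0 h1 ⊢
  rw [Lx, MvPolynomial.C_mul', MvPolynomial.C_mul']
  exact Submodule.sub_mem _ (Submodule.smul_mem _ _ h0) (Submodule.smul_mem _ _ h1)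

lemma Ly_hom (v : Fin 2 → k) :
    MvPolynomial.IsWeightedHomogeneous bw (Ly v) (((0 : ℕ), (1 : ℕ)) : ℕ × ℕ) := by
  have h0 : MvPolynomial.IsWeightedHomogeneous bw
      (MvPolynomial.X (Sum.inr 0) : S2 k) ((0, 1) : ℕ × ℕ) :=
    MvPolynomial.isWeightedHomogeneous_X k bw (Sum.inr 0)
  have h1 : MvPolynomial.IsWeightedHomogeneous bw
      (MvPolynomial.X (Sum.inr 1) : S2 k) ((0, 1) : ℕ × ℕ) :=
    MvPolynomial.isWeightedHomogeneous_X k bw (Sum.inr 1)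
  rw [← mem_weightedHomogeneousSubmodule] at h0 h1 ⊢
  rw [Ly, MvPolynomial.C_mul', MvPolynomial.C_mul']
  exact Submodule.sub_mem _ (Submodule.smul_mem _ _ h0) (Submodule.smul_mem _ _ h1)

lemma X_pow_hom (s : BiVar) (m : ℕ) :
    MvPolynomial.IsWeightedHomogeneous bw ((MvPolynomial.X s : S2 k) ^ m) (m • bw s) := by
  induction m with
  | zero => simpa [zero_nsmul] using MvPolynomial.isWeightedHomogeneous_one k bw
  | succ m ih =>
    rw [pow_succ, succ_nsmul]
    exact ih.mul (MvPolynomial.isWeightedHomogeneous_X k bw s)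

lemma pivot_ne {v : Fin 2 → k} (hv : v ≠ 0) : v (pivot v) ≠ 0 := by
  rw [pivot]
  split_ifs with h
  · exact h
  · push_neg at h
    rcases (vec_ne_zero_iff v).1 hv with h0 | h1
    · exact absurd h h0
    · exact h1

lemma cross_rep_ne {A B : P1 k} (hAB : A ≠ B) : cross A.rep B.rep ≠ 0 := by
  intro hc
  exact hAB (by
    rw [← Projectivization.mk_rep A, ← Projectivization.mk_rep B]
    exact mk_eq_mk_of_cross A.rep_nonzero B.rep_nonzero hc)

/-- Existence of separators of all degrees (i,j) with i ≥ q, j ≥ p. -/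
lemma sep_exists {i j qn pn : ℕ} (hqi : qn ≤ i) (hpj : pn ≤ j)
    (AR : ℕ → P1 k) (AC : ℕ → P1 k) (i₀ j₀ : ℕ) (SR SC : Finset ℕ)
    (hSRcard : SR.card = qn) (hSCcard : SC.card = pn)
    (hSR : ∀ r ∈ SR, AR r ≠ AR i₀) (hSC : ∀ c ∈ SC, AC c ≠ AC j₀) :
    ∃ f : S2 k, MvPolynomial.IsWeightedHomogeneous bw f ((i, j) : ℕ × ℕ) ∧
      (∀ r c : ℕ, (r ∈ SR ∨ c ∈ SC) → evalPt (AR r, AC c) f = 0) ∧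
      evalPt (AR i₀, AC j₀) f ≠ 0 := by
  classical
  set F1 : S2 k := ∏ r ∈ SR, Lx ((AR r).rep) with hF1
  set F2 : S2 k := ∏ c ∈ SC, Ly ((AC c).rep) with hF2
  set F3 : S2 k := MvPolynomial.X (Sum.inl (pivot (AR i₀).rep)) ^ (i - qn) with hF3
  set F4 : S2 k := MvPolynomial.X (Sum.inr (pivot (AC j₀).rep)) ^ (j - pn) with hF4
  refine ⟨F1 * F2 * F3 * F4, ?_, ?_, ?_⟩
  · have h1 : MvPolynomial.IsWeightedHomogeneous bw F1 ((qn, 0) : ℕ × ℕ) := by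
      have := MvPolynomial.IsWeightedHomogeneous.prod SR (fun r => Lx ((AR r).rep))
        (fun _ => ((1, 0) : ℕ × ℕ)) (fun r _ => Lx_hom _)
      rwa [Finset.sum_const, hSRcard, Prod.smul_mk, smul_eq_mul, smul_eq_mul,
        Nat.mul_one, Nat.mul_zero] at this
    have h2 : MvPolynomial.IsWeightedHomogeneous bw F2 ((0, pn) : ℕ × ℕ) := by
      have := MvPolynomial.IsWeightedHomogeneous.prod SC (fun c => Ly ((AC c).rep))
        (fun _ => ((0, 1) : ℕ × ℕ)) (fun c _ => Ly_hom _)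
      rwa [Finset.sum_const, hSCcard, Prod.smul_mk, smul_eq_mul, smul_eq_mul,
        Nat.mul_one, Nat.mul_zero] at this
    have h3 : MvPolynomial.IsWeightedHomogeneous bw F3 ((i - qn, 0) : ℕ × ℕ) := by
      have := X_pow_hom (k := k) (Sum.inl (pivot (AR i₀).rep)) (i - qn)
      rwa [show bw (Sum.inl (pivot (AR i₀).rep)) = ((1, 0) : ℕ × ℕ) from rfl,
        Prod.smul_mk, smul_eq_mul, smul_eq_mul, Nat.mul_one, Nat.mul_zero] at this
    have h4 : MvPolynomial.IsWeightedHomogeneous bw F4 ((0, j - pn) : ℕ × ℕ) := by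
      have := X_pow_hom (k := k) (Sum.inr (pivot (AC j₀).rep)) (j - pn)
      rwa [show bw (Sum.inr (pivot (AC j₀).rep)) = ((0, 1) : ℕ × ℕ) from rfl,
        Prod.smul_mk, smul_eq_mul, smul_eq_mul, Nat.mul_one, Nat.mul_zero] at this
    have htot := ((h1.mul h2).mul h3).mul h4
    have hdeq : ((qn, 0) + (0, pn) + (i - qn, 0) + (0, j - pn) : ℕ × ℕ) = (i, j) := by
      rw [Prod.ext_iff]
      constructor <;> simp <;> omega
    rwa [hdeq] at htot
  · intro r c hrc
    have : evalPt (AR r, AC c) (F1 * F2 * F3 * F4)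
        = evalPt (AR r, AC c) F1 * evalPt (AR r, AC c) F2 *
          evalPt (AR r, AC c) F3 * evalPt (AR r, AC c) F4 := by
      simp [map_mul]
    rw [this]
    rcases hrc with hr | hc
    · have : evalPt (AR r, AC c) F1 = 0 := by
        rw [hF1, map_prod]
        apply Finset.prod_eq_zero hr
        rw [evalPt_Lx]
        show cross (AR r).rep (AR r).rep = 0
        rw [cross]
        ring
      rw [this]
      ring
    · have : evalPt (AR r, AC c) F2 = 0 := by
        rw [hF2, map_prod]
        apply Finset.prod_eq_zero hc
        rw [evalPt_Ly]
        show cross (AC c).rep (AC c).rep = 0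
        rw [cross]
        ring
      rw [this]
      ring
  · have e1 : evalPt (AR i₀, AC j₀) F1 ≠ 0 := by
      rw [hF1, map_prod]
      apply Finset.prod_ne_zero_iff.2
      intro r hr
      rw [evalPt_Lx]
      exact cross_rep_ne (A := AR i₀) (B := AR r) (fun hAB => hSR r hr hAB.symm)
    have e2 : evalPt (AR i₀, AC j₀) F2 ≠ 0 := by
      rw [hF2, map_prod]
      apply Finset.prod_ne_zero_iff.2
      intro c hc
      rw [evalPt_Ly]
      exact cross_rep_ne (A := AC j₀) (B := AC c) (fun hAB => hSC c hc hAB.symm)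
    have e3 : evalPt (AR i₀, AC j₀) F3 ≠ 0 := by
      rw [hF3, map_pow, evalPt_X_inl]
      exact pow_ne_zero _ (pivot_ne (Projectivization.rep_nonzero (AR i₀)))
    have e4 : evalPt (AR i₀, AC j₀) F4 ≠ 0 := by
      rw [hF4, map_pow, evalPt_X_inr]
      exact pow_ne_zero _ (pivot_ne (Projectivization.rep_nonzero (AC j₀)))
    simp only [map_mul]
    exact mul_ne_zero (mul_ne_zero (mul_ne_zero e1 e2) e3) e4

lemma downclosed_char {A : Finset ℕ} (hdc : ∀ r ∈ A, ∀ r' ≤ r, r' ∈ A) :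
    ∀ r, (r ∈ A ↔ r < A.card) := by
  intro r
  constructor
  · intro hr
    by_contra hge
    push_neg at hge
    have hsub : Finset.range (r + 1) ⊆ A := by
      intro s hs
      rw [Finset.mem_range] at hs
      exact hdc r hr s (by omega)
    have := Finset.card_le_card hsub
    rw [Finset.card_range] at this
    omega
  · intro hr
    by_contra hnot
    have hsub : A ⊆ Finset.range r := by
      intro s hs
      rw [Finset.mem_range]
      by_contra hge
      push_neg at hge
      exact hnot (hdc s hs r hge)
    have := Finset.card_le_card hsub
    rw [Finset.card_range] at this
    omega

lemma col_char (T : Staircase k) {i₀ j₀ : ℕ} (hm : (i₀, j₀) ∈ T.D) :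
    ∀ r, ((r, j₀) ∈ T.D ↔ r < T.colCount j₀) := by
  classical
  set A : Finset ℕ := (T.D.filter (fun p => p.2 = j₀)).image Prod.fst with hA
  have hmemA : ∀ r, (r ∈ A ↔ (r, j₀) ∈ T.D) := by
    intro r
    simp only [hA, Finset.mem_image, Finset.mem_filter]
    constructor
    · rintro ⟨pp, ⟨hp, hp2⟩, rfl⟩
      rw [← hp2]
      simpa using hp
    · intro hmm
      exact ⟨(r, j₀), ⟨hmm, rfl⟩, rfl⟩
  have hcard : A.card = T.colCount j₀ := by
    rw [hA, Staircase.colCount]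
    apply Finset.card_image_of_injOn
    intro pp hp qq hq hpq
    rw [Finset.mem_coe, Finset.mem_filter] at hp hq
    exact Prod.ext hpq (hp.2.trans hq.2.symm)
  have hdc : ∀ r ∈ A, ∀ r' ≤ r, r' ∈ A := by
    intro r hr r' hr'
    rw [hmemA] at hr ⊢
    exact T.lower _ hr (r', j₀) hr' le_rfl
  intro r
  rw [← hmemA, downclosed_char hdc, hcard]

lemma row_char (T : Staircase k) {i₀ j₀ : ℕ} (hm : (i₀, j₀) ∈ T.D) :
    ∀ c, ((i₀, c) ∈ T.D ↔ c < T.rowCount i₀) := by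
  classical
  set A : Finset ℕ := (T.D.filter (fun p => p.1 = i₀)).image Prod.snd with hA
  have hmemA : ∀ c, (c ∈ A ↔ (i₀, c) ∈ T.D) := by
    intro c
    simp only [hA, Finset.mem_image, Finset.mem_filter]
    constructor
    · rintro ⟨pp, ⟨hp, hp1⟩, rfl⟩
      rw [← hp1]
      simpa using hp
    · intro hmm
      exact ⟨(i₀, c), ⟨hmm, rfl⟩, rfl⟩
  have hcard : A.card = T.rowCount i₀ := by
    rw [hA, Staircase.rowCount]
    apply Finset.card_image_of_injOn
    intro pp hp qq hq hpq
    rw [Finset.mem_coe, Finset.mem_filter] at hp hq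
    exact Prod.ext (hp.2.trans hq.2.symm) hpq
  have hdc : ∀ c ∈ A, ∀ c' ≤ c, c' ∈ A := by
    intro c hc c' hc'
    rw [hmemA] at hc ⊢
    exact T.lower _ hc (i₀, c') le_rfl hc'
  intro c
  rw [← hmemA, downclosed_char hdc, hcard]

end Stmt13Aux

end Stmt13Aux

/-- removing interior points with pairwise distinct rows and columns one at
a time, the Hilbert function drops by exactly 1 on the quadrant (q_{l+1},p_{l+1}) + ℕ². -/
theorem stmt13 (k : Type) [Field k] [IsAlgClosed k] (T : Staircase k)
    (h : ℕ) (pt : Fin h → ℕ × ℕ)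
    (hmem : ∀ l, T.Interior (pt l).1 (pt l).2)
    (hrow : ∀ l l', (pt l).1 = (pt l').1 → l = l')
    (hcol : ∀ l l', (pt l).2 = (pt l').2 → l = l')
    (q p : Fin h → ℕ)
    (hq : ∀ l, T.colCount (pt l).2 = q l + 1)
    (hp : ∀ l, T.rowCount (pt l).1 = p l + 1) :
    ∀ l : ℕ, 1 ≤ l → ∀ hl : l < h, ∀ i j : ℕ,
      ((q ⟨l, hl⟩ ≤ i ∧ p ⟨l, hl⟩ ≤ j) →
        (hilb (T.residual ((Finset.univ.filter (fun m : Fin h => (m : ℕ) < l + 1)).image pt)) i j : ℤ) =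
          (hilb (T.residual ((Finset.univ.filter (fun m : Fin h => (m : ℕ) < l)).image pt)) i j : ℤ) - 1) ∧
      (¬ (q ⟨l, hl⟩ ≤ i ∧ p ⟨l, hl⟩ ≤ j) →
        hilb (T.residual ((Finset.univ.filter (fun m : Fin h => (m : ℕ) < l + 1)).image pt)) i j =
          hilb (T.residual ((Finset.univ.filter (fun m : Fin h => (m : ℕ) < l)).image pt)) i j) := by
  classical
  intro l _ hl i j
  set L : Fin h := ⟨l, hl⟩ with hLdef
  obtain ⟨hD0', -⟩ := hmem L
  set i₀ : ℕ := (pt L).1 with hi₀def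
  set j₀ : ℕ := (pt L).2 with hj₀def
  have hptL : pt L = (i₀, j₀) := rfl
  have hD0 : (i₀, j₀) ∈ T.D := hD0'
  have hcol_iff : ∀ r, ((r, j₀) ∈ T.D ↔ r ≤ q L) := by
    intro r
    rw [Stmt13Aux.col_char T hD0 r]
    have hql := hq L
    rw [← hj₀def] at hql
    omega
  have hrow_iff : ∀ c, ((i₀, c) ∈ T.D ↔ c ≤ p L) := by
    intro c
    rw [Stmt13Aux.row_char T hD0 c]
    have hpl := hp L
    rw [← hi₀def] at hpl
    omega
  have hi₀q : i₀ ≤ q L := (hcol_iff i₀).1 hD0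
  have hj₀p : j₀ ≤ p L := (hrow_iff j₀).1 hD0
  -- the removed-index sets
  set E1 : Finset (ℕ × ℕ) :=
    (Finset.univ.filter (fun m : Fin h => (m : ℕ) < l)).image pt with hE1def
  set E2 : Finset (ℕ × ℕ) :=
    (Finset.univ.filter (fun m : Fin h => (m : ℕ) < l + 1)).image pt with hE2def
  have hfil : (Finset.univ.filter (fun m : Fin h => (m : ℕ) < l + 1))
      = insert L (Finset.univ.filter (fun m : Fin h => (m : ℕ) < l)) := by
    ext m
    simp only [Finset.mem_insert, Finset.mem_filter, Finset.mem_univ, true_and, Fin.ext_iff]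
    have : (L : ℕ) = l := rfl
    omega
  have hE2 : E2 = insert (pt L) E1 := by
    rw [hE2def, hfil, Finset.image_insert, hE1def]
  have hptE1 : pt L ∉ E1 := by
    intro hmem'
    rw [hE1def, Finset.mem_image] at hmem'
    obtain ⟨m, hm, hme⟩ := hmem'
    rw [Finset.mem_filter] at hm
    have hmL : m = L := hrow m L (by rw [hme])
    rw [hmL] at hm
    have : (L : ℕ) = l := rfl
    omega
  have hptE2 : pt L ∈ E2 := by rw [hE2]; exact Finset.mem_insert_self _ _
  -- the residual point sets
  set P : PtQ k := (T.R i₀, T.C j₀) with hPdef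
  set Z1 : Finset (PtQ k) := (T.D \ E1).image (fun pp => (T.R pp.1, T.C pp.2)) with hZ1def
  set Z2 : Finset (PtQ k) := (T.D \ E2).image (fun pp => (T.R pp.1, T.C pp.2)) with hZ2def
  have hres1 : T.residual E1 = idealOfFinset Z1 := rfl
  have hres2 : T.residual E2 = idealOfFinset Z2 := rfl
  have hDdiff : T.D \ E2 = (T.D \ E1).erase (pt L) := by
    ext pp
    rw [hE2]
    simp only [Finset.mem_sdiff, Finset.mem_erase, Finset.mem_insert]
    tauto
  have hptLD : pt L ∈ T.D \ E1 := Finset.mem_sdiff.2 ⟨hD0', hptE1⟩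
  have hDins : T.D \ E1 = insert (pt L) (T.D \ E2) := by
    rw [hDdiff, Finset.insert_erase hptLD]
  have hZ1ins : Z1 = insert P Z2 := by
    rw [hZ1def, hDins, Finset.image_insert, hZ2def, hptL]
  -- separator index sets
  set SR : Finset ℕ := (Finset.range (q L + 1)).erase i₀ with hSRdef
  set SC : Finset ℕ := (Finset.range (p L + 1)).erase j₀ with hSCdef
  have hSRcard : SR.card = q L := by
    rw [hSRdef, Finset.card_erase_of_mem (Finset.mem_range.2 (by omega)), Finset.card_range]
    omega
  have hSCcard : SC.card = p L := by
    rw [hSCdef, Finset.card_erase_of_mem (Finset.mem_range.2 (by omega)), Finset.card_range]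
    omega
  have hSRmem : ∀ r ∈ SR, r ≤ q L ∧ r ≠ i₀ := by
    intro r hr
    rw [hSRdef, Finset.mem_erase, Finset.mem_range] at hr
    exact ⟨by omega, hr.1⟩
  have hSCmem : ∀ c ∈ SC, c ≤ p L ∧ c ≠ j₀ := by
    intro c hc
    rw [hSCdef, Finset.mem_erase, Finset.mem_range] at hc
    exact ⟨by omega, hc.1⟩
  have hi₀a : i₀ ≤ T.a := (T.bound _ hD0).1
  have hj₀b : j₀ ≤ T.b := (T.bound _ hD0).2
  have hSRa : ∀ r ∈ SR, r ≤ T.a := by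
    intro r hr
    exact (T.bound _ ((hcol_iff r).2 (hSRmem r hr).1)).1
  have hSCb : ∀ c ∈ SC, c ≤ T.b := by
    intro c hc
    exact (T.bound _ ((hrow_iff c).2 (hSCmem c hc).1)).2
  have hSRne : ∀ r ∈ SR, T.R r ≠ T.R i₀ := by
    intro r hr he
    exact (hSRmem r hr).2 (T.hR r (hSRa r hr) i₀ hi₀a he)
  have hSCne : ∀ c ∈ SC, T.C c ≠ T.C j₀ := by
    intro c hc he
    exact (hSCmem c hc).2 (T.hC c (hSCb c hc) j₀ hj₀b he)
  -- the column points P_{r, j₀} (r ∈ SR) and row points P_{i₀, c} (c ∈ SC) stay in Z2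
  have hcolZ2 : ∀ r ∈ SR, (T.R r, T.C j₀) ∈ Z2 := by
    intro r hr
    rw [hZ2def, Finset.mem_image]
    refine ⟨(r, j₀), Finset.mem_sdiff.2 ⟨(hcol_iff r).2 (hSRmem r hr).1, ?_⟩, rfl⟩
    intro hmm
    rw [hE2def, Finset.mem_image] at hmm
    obtain ⟨m, hm, hme⟩ := hmm
    have hmL : m = L := hcol m L (by rw [hme])
    rw [hmL] at hme
    exact (hSRmem r hr).2 (Prod.ext_iff.1 (hptL.symm.trans hme)).1.symm
  have hrowZ2 : ∀ c ∈ SC, (T.R i₀, T.C c) ∈ Z2 := by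
    intro c hc
    rw [hZ2def, Finset.mem_image]
    refine ⟨(i₀, c), Finset.mem_sdiff.2 ⟨(hrow_iff c).2 (hSCmem c hc).1, ?_⟩, rfl⟩
    intro hmm
    rw [hE2def, Finset.mem_image] at hmm
    obtain ⟨m, hm, hme⟩ := hmm
    have hmL : m = L := hrow m L (by rw [hme])
    rw [hmL] at hme
    exact (hSCmem c hc).2 (Prod.ext_iff.1 (hptL.symm.trans hme)).2.symm
  -- dichotomy for points of Z2
  have hdich : ∀ pp ∈ T.D \ E2, pp.1 ∈ SR ∨ pp.2 ∈ SC := by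
    intro pp hpp
    rw [Finset.mem_sdiff] at hpp
    obtain ⟨hpD, hpE⟩ := hpp
    by_cases hr1 : pp.1 ≤ q L ∧ pp.1 ≠ i₀
    · left
      rw [hSRdef, Finset.mem_erase, Finset.mem_range]
      exact ⟨hr1.2, by omega⟩
    · right
      rw [hSCdef, Finset.mem_erase, Finset.mem_range]
      push_neg at hr1
      have hD' : (pp.1, pp.2) ∈ T.D := by simpa using hpD
      rcases le_or_gt pp.1 (q L) with hle | hgt
      · have hri : pp.1 = i₀ := hr1 hle
        have hcle : pp.2 ≤ p L := (hrow_iff pp.2).1 (by rw [← hri]; exact hD')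
        refine ⟨?_, by omega⟩
        intro hcj
        apply hpE
        have hppL : pp = pt L := by
          rw [hptL]
          exact Prod.ext hri hcj
        rw [hppL]
        exact hptE2
      · have hcj : pp.2 < j₀ := by
          by_contra hge
          push_neg at hge
          have hmem2 : (pp.1, j₀) ∈ T.D := T.lower pp hpD (pp.1, j₀) le_rfl hge
          have := (hcol_iff pp.1).1 hmem2
          omega
        exact ⟨by omega, by omega⟩
  constructor
  · -- separator exists: Hilbert function drops by one
    rintro ⟨hqi, hpj⟩
    obtain ⟨f, hfhom, hfvan, hfne⟩ := Stmt13Aux.sep_exists (k := k) hqi hpj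
      T.R T.C i₀ j₀ SR SC hSRcard hSCcard hSRne hSCne
    have hvanZ2 : ∀ x ∈ Z2, evalPt x f = 0 := by
      intro x hx
      rw [hZ2def, Finset.mem_image] at hx
      obtain ⟨pp, hpp, rfl⟩ := hx
      exact hfvan pp.1 pp.2 (hdich pp hpp)
    have hstep := (Stmt13Aux.hilb_insert Z2 P i j).1 ⟨f, hfhom, hvanZ2, hfne⟩
    rw [hres2, hres1, hZ1ins]
    exact hstep
  · -- no separator: Hilbert function unchanged
    intro hnotqp
    have hcase : i < q L ∨ j < p L := by omega
    have hno : ∀ f, MvPolynomial.IsWeightedHomogeneous bw f ((i, j) : ℕ × ℕ) →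
        (∀ x ∈ Z2, evalPt x f = 0) → evalPt P f = 0 := by
      intro f hfhom hfvan
      show MvPolynomial.eval (Sum.elim (T.R i₀).rep (T.C j₀).rep) f = 0
      rcases hcase with hiq | hjp
      · -- too few rows: restrict to the column C_{j₀}
        set e : Fin (q L) → ℕ :=
          fun r => ((SR.equivFin.symm (Fin.cast hSRcard.symm r) : {x // x ∈ SR}) : ℕ) with hedef
        have he_mem : ∀ r, e r ∈ SR := fun r =>
          (SR.equivFin.symm (Fin.cast hSRcard.symm r)).2
        have he_inj : ∀ r r' : Fin (q L), e r = e r' → r = r' := by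
          intro r r' hee
          have h1 : SR.equivFin.symm (Fin.cast hSRcard.symm r)
              = SR.equivFin.symm (Fin.cast hSRcard.symm r') := Subtype.ext hee
          have h2 := SR.equivFin.symm.injective h1
          have h3 := congrArg Fin.val h2
          exact Fin.ext h3
        apply Stmt13Aux.no_sep_col (n := q L) hfhom hiq (T.R i₀).rep
          (Projectivization.rep_nonzero _) (T.C j₀).rep
          (fun r => (T.R (e r)).rep) (fun r => Projectivization.rep_nonzero _)
        · intro r r' hrr
          apply Stmt13Aux.cross_rep_ne
          intro hRe
          exact hrr (he_inj r r'
            (T.hR (e r) (hSRa _ (he_mem r)) (e r') (hSRa _ (he_mem r')) hRe))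
        · intro r
          exact hfvan (T.R (e r), T.C j₀) (hcolZ2 (e r) (he_mem r))
      · -- too few columns: restrict to the row R_{i₀}
        set e : Fin (p L) → ℕ :=
          fun c => ((SC.equivFin.symm (Fin.cast hSCcard.symm c) : {x // x ∈ SC}) : ℕ) with hedef
        have he_mem : ∀ c, e c ∈ SC := fun c =>
          (SC.equivFin.symm (Fin.cast hSCcard.symm c)).2
        have he_inj : ∀ c c' : Fin (p L), e c = e c' → c = c' := by
          intro c c' hee
          have h1 : SC.equivFin.symm (Fin.cast hSCcard.symm c)
              = SC.equivFin.symm (Fin.cast hSCcard.symm c') := Subtype.ext hee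
          have h2 := SC.equivFin.symm.injective h1
          have h3 := congrArg Fin.val h2
          exact Fin.ext h3
        apply Stmt13Aux.no_sep_row (n := p L) hfhom hjp (T.C j₀).rep
          (Projectivization.rep_nonzero _) (T.R i₀).rep
          (fun c => (T.C (e c)).rep) (fun c => Projectivization.rep_nonzero _)
        · intro c c' hcc
          apply Stmt13Aux.cross_rep_ne
          intro hCe
          exact hcc (he_inj c c'
            (T.hC (e c) (hSCb _ (he_mem c)) (e c') (hSCb _ (he_mem c')) hCe))
        · intro c
          exact hfvan (T.R i₀, T.C (e c)) (hrowZ2 (e c) (he_mem c))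
    have hfin := (Stmt13Aux.hilb_insert Z2 P i j).2 hno
    rw [hres2, hres1, hZ1ins]
    exact hfin
end

section
/- Let X be a reduced ACM zero-dimensional subscheme of P^1 × P^1 and let P_{i_1 j_1},…,P_{i_h j_h} ∈ X be interior points with pairwise distinct row indices and pairwise distinct column indices. Set Z = X \ {P_{i_1 j_1},…,P_{i_h j_h}}, q_l + 1 = #(X ∩ C_{j_l}), p_l + 1 = #(X ∩ R_{i_l}), and r_{ij} = #{l : (q_l, p_l) = (i,j)}. Then the first difference of the Hilbert function of Z satisfies ΔM_Z(i,j) = ΔM_X(i,j) − r_{ij} for all (i,j). -/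
/- Common setup: the bigraded coordinate ring of Q = P^1 x P^1, bigraded Hilbert
functions, point ideals, separators, minimal free resolutions, staircase (Ferrers)
configurations of reduced ACM schemes. -/

open MvPolynomial

attribute [local instance] Classical.propDecidable

namespace Stmt14Aux
open MvPolynomial
attribute [local instance] Classical.propDecidable
noncomputable section

variable {k : Type} [Field k]

lemma bw_weight (d : BiVar →₀ ℕ) :
    (Finsupp.weight bw d) = (d (Sum.inl 0) + d (Sum.inl 1), d (Sum.inr 0) + d (Sum.inr 1)) := by
  rw [Finsupp.weight_apply, Finsupp.sum_fintype _ _ (by intro v; simp)]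
  rw [Fintype.sum_sum_type]
  simp [bw, Fin.sum_univ_two, Prod.ext_iff]

lemma WH_fd (n m : ℕ) :
    FiniteDimensional k (weightedHomogeneousSubmodule k bw ((n, m) : ℕ × ℕ)) := by
  have hle : weightedHomogeneousSubmodule k bw ((n, m) : ℕ × ℕ) ≤
      MvPolynomial.restrictTotalDegree BiVar k (n + m) := by
    intro f hf
    rw [MvPolynomial.mem_restrictTotalDegree]
    apply Finset.sup_le
    intro d hd
    have h1 : Finsupp.weight bw d = ((n, m) : ℕ × ℕ) := hf (MvPolynomial.mem_support_iff.mp hd)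
    rw [bw_weight] at h1
    have h2 : d.sum (fun _ e => e) = d (Sum.inl 0) + d (Sum.inl 1) + (d (Sum.inr 0) + d (Sum.inr 1)) := by
      rw [Finsupp.sum_fintype _ _ (by intro v; simp)]
      rw [Fintype.sum_sum_type]
      simp [Fin.sum_univ_two]
    rw [h2]
    have := Prod.ext_iff.mp h1
    omega
  exact Submodule.finiteDimensional_of_le hle

/-- The space of bihomogeneous forms of degree d vanishing at all points of W. -/
def Kd (W : Finset (PtQ k)) (d : ℕ × ℕ) : Submodule k (S2 k) :=
  (weightedHomogeneousSubmodule k bw d) ⊓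
    ⨅ x ∈ W, Submodule.restrictScalars k (RingHom.ker (evalPt x))

lemma mem_Kd {W : Finset (PtQ k)} {d : ℕ × ℕ} {f : S2 k} :
    f ∈ Kd W d ↔ IsWeightedHomogeneous bw f d ∧ ∀ x ∈ W, evalPt x f = 0 := by
  simp [Kd, Submodule.mem_inf, Submodule.mem_iInf, mem_weightedHomogeneousSubmodule,
    RingHom.mem_ker]

lemma pointIdeal_le_ker (x : PtQ k) : pointIdeal x ≤ RingHom.ker (evalPt x) := by
  rw [pointIdeal, Ideal.span_le]
  rintro f ⟨-, hf⟩
  exact hf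

lemma mem_idealOfFinset {W : Finset (PtQ k)} {f : S2 k} :
    f ∈ idealOfFinset W ↔ ∀ x ∈ W, f ∈ pointIdeal x := by
  simp only [idealOfFinset, Ideal.mem_iInf]

lemma Ipiece_idealOfFinset (W : Finset (PtQ k)) (d : ℕ × ℕ) :
    Ipiece (idealOfFinset W) d = Kd W d := by
  ext f
  rw [mem_Kd]
  constructor
  · rintro ⟨hfI, hfh⟩
    refine ⟨hfh, fun x hx => ?_⟩
    have hmem : f ∈ pointIdeal x :=
      mem_idealOfFinset.mp (Submodule.restrictScalars_mem _ _ _ |>.mp hfI) x hx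
    exact pointIdeal_le_ker x hmem
  · rintro ⟨hfh, hvan⟩
    refine ⟨(Submodule.restrictScalars_mem _ _ _).mpr ?_, hfh⟩
    exact mem_idealOfFinset.mpr fun x hx => Ideal.subset_span ⟨⟨d, hfh⟩, hvan x hx⟩

/-- evalPt as a k-linear map. -/
def evalLin (x : PtQ k) : S2 k →ₗ[k] k where
  toFun := evalPt x
  map_add' := map_add _
  map_smul' := by
    intro c f
    simp only [RingHom.id_apply, smul_eq_mul]
    rw [MvPolynomial.smul_eq_C_mul]
    simp [evalPt]

/-- Evaluation of degree-d forms at the points of W. -/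
def φm (W : Finset (PtQ k)) (d : ℕ × ℕ) :
    (weightedHomogeneousSubmodule k bw d) →ₗ[k] (W → k) :=
  LinearMap.pi fun x => (evalLin (x : PtQ k)).comp (Submodule.subtype _)

lemma mem_ker_φm {W : Finset (PtQ k)} {d : ℕ × ℕ}
    {f : weightedHomogeneousSubmodule k bw d} :
    f ∈ LinearMap.ker (φm W d) ↔ ∀ x ∈ W, evalPt x f.1 = 0 := by
  constructor
  · intro hf x hx
    have := congrFun (LinearMap.mem_ker.mp hf) ⟨x, hx⟩
    simpa [φm, evalLin] using this
  · intro hf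
    rw [LinearMap.mem_ker]
    funext x
    simpa [φm, evalLin] using hf x.1 x.2

lemma map_ker_φm (W : Finset (PtQ k)) (d : ℕ × ℕ) :
    Submodule.map (weightedHomogeneousSubmodule k bw d).subtype (LinearMap.ker (φm W d)) =
      Kd W d := by
  ext g
  simp only [Submodule.mem_map, Submodule.coe_subtype]
  constructor
  · rintro ⟨f, hf, rfl⟩
    exact mem_Kd.mpr ⟨f.2, mem_ker_φm.mp hf⟩
  · intro hg
    rcases mem_Kd.mp hg with ⟨h1, h2⟩
    exact ⟨⟨g, h1⟩, mem_ker_φm.mpr h2, rfl⟩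

lemma finrank_Kd_eq_ker (W : Finset (PtQ k)) (d : ℕ × ℕ) :
    Module.finrank k (Kd W d) = Module.finrank k (LinearMap.ker (φm W d)) := by
  rw [← map_ker_φm]
  exact (Submodule.equivMapOfInjective _ (Submodule.injective_subtype _) _).symm.finrank_eq

lemma hilb_eq (W : Finset (PtQ k)) (i j : ℕ) :
    hilb (idealOfFinset W) i j =
      Module.finrank k (weightedHomogeneousSubmodule k bw ((i, j) : ℕ × ℕ)) -
        Module.finrank k (Kd W ((i, j) : ℕ × ℕ)) := by
  rw [hilb, Ipiece_idealOfFinset W ((i, j) : ℕ × ℕ)]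

end
end Stmt14Aux

namespace Stmt14Aux
open MvPolynomial Projectivization
attribute [local instance] Classical.propDecidable
noncomputable section

variable {k : Type} [Field k]

/-! ### Vandermonde machinery -/

/-- P¹ points with equal representatives-up-to-scalar are equal. -/
lemma P1_eq_of_smul {x y : P1 k} (a : k) (ha : a • y.rep = x.rep) : x = y := by
  rw [← Projectivization.mk_rep x, ← Projectivization.mk_rep y,
    Projectivization.mk_eq_mk_iff']
  exact ⟨a, ha⟩

lemma rep1_ne_zero {x : P1 k} (h : x.rep 0 = 0) : x.rep 1 ≠ 0 := by
  intro h1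
  apply Projectivization.rep_nonzero x
  funext i
  fin_cases i <;> simpa [h, h1]

/-- At most one point of P¹ is "at infinity" among the representatives. -/
lemma inf_unique {x y : P1 k} (hx : x.rep 0 = 0) (hy : y.rep 0 = 0) : x = y := by
  have hx1 := rep1_ne_zero hx
  have hy1 := rep1_ne_zero hy
  refine P1_eq_of_smul (x.rep 1 / y.rep 1) ?_
  funext i
  fin_cases i
  · simp [hx, hy]
  · show x.rep 1 / y.rep 1 * y.rep 1 = x.rep 1
    field_simp

lemma slope_injOn {x y : P1 k} (hx : x.rep 0 ≠ 0) (hy : y.rep 0 ≠ 0)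
    (hsl : x.rep 1 / x.rep 0 = y.rep 1 / y.rep 0) : x = y := by
  refine P1_eq_of_smul (x.rep 0 / y.rep 0) ?_
  funext i
  fin_cases i
  · show x.rep 0 / y.rep 0 * y.rep 0 = x.rep 0
    field_simp
  · show x.rep 0 / y.rep 0 * y.rep 1 = x.rep 1
    rw [div_eq_div_iff (by exact hx) (by exact hy)] at hsl
    field_simp
    linear_combination -hsl

lemma evalPt_pair (x y : P1 k) (F : S2 k) :
    evalPt ((x, y) : PtQ k) F = ∑ d ∈ F.support, coeff d F *
      (x.rep 0 ^ d (Sum.inl 0) * x.rep 1 ^ d (Sum.inl 1) *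
        (y.rep 0 ^ d (Sum.inr 0) * y.rep 1 ^ d (Sum.inr 1))) := by
  rw [evalPt, MvPolynomial.eval_eq']
  apply Finset.sum_congr rfl
  intro d _
  congr 1
  rw [Fintype.prod_sum_type]
  simp [Fin.prod_univ_two]

/-- The one-variable polynomial controlling the restriction of a (n,m)-form to the
horizontal line through y. -/
lemma evalPt_form (F : S2 k) {n m : ℕ} (hF : IsWeightedHomogeneous bw F ((n, m) : ℕ × ℕ))
    (y : P1 k) :
    ∃ qq : Polynomial k, qq.natDegree ≤ n ∧
      (∀ x : P1 k, x.rep 0 ≠ 0 →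
        evalPt ((x, y) : PtQ k) F = x.rep 0 ^ n * qq.eval (x.rep 1 / x.rep 0)) ∧
      (∀ x : P1 k, x.rep 0 = 0 →
        evalPt ((x, y) : PtQ k) F = qq.coeff n * x.rep 1 ^ n) := by
  have hsupp : ∀ d ∈ F.support, d (Sum.inl 0) + d (Sum.inl 1) = n := by
    intro d hd
    have h1 := hF (MvPolynomial.mem_support_iff.mp hd)
    rw [bw_weight] at h1
    exact (Prod.ext_iff.mp h1).1
  refine ⟨∑ d ∈ F.support, Polynomial.C (coeff d F *
      (y.rep 0 ^ d (Sum.inr 0) * y.rep 1 ^ d (Sum.inr 1))) * Polynomial.X ^ (d (Sum.inl 1)),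
    ?_, ?_, ?_⟩
  · apply Polynomial.natDegree_sum_le_of_forall_le
    intro d hd
    refine le_trans (Polynomial.natDegree_C_mul_le _ _) ?_
    rw [Polynomial.natDegree_X_pow]
    have := hsupp d hd
    omega
  · intro x hx
    rw [evalPt_pair, Polynomial.eval_finset_sum, Finset.mul_sum]
    apply Finset.sum_congr rfl
    intro d hd
    simp only [Polynomial.eval_mul, Polynomial.eval_C, Polynomial.eval_pow, Polynomial.eval_X]
    have h2 := hsupp d hd
    have hxn : x.rep 0 ^ n = x.rep 0 ^ d (Sum.inl 0) * x.rep 0 ^ d (Sum.inl 1) := by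
      rw [← pow_add]
      congr 1
      omega
    rw [div_pow, hxn]
    have hpow : x.rep 0 ^ d (Sum.inl 1) ≠ 0 := pow_ne_zero _ hx
    field_simp
  · intro x hx
    rw [evalPt_pair, Polynomial.finset_sum_coeff, Finset.sum_mul]
    apply Finset.sum_congr rfl
    intro d hd
    simp only [Polynomial.coeff_C_mul, Polynomial.coeff_X_pow]
    have h2 := hsupp d hd
    rw [hx]
    by_cases hc : d (Sum.inl 1) = n
    · have h0 : d (Sum.inl 0) = 0 := by omega
      rw [h0, hc]
      simp
      ring
    · have h0 : 0 < d (Sum.inl 0) := by omega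
      rw [zero_pow (by omega : d (Sum.inl 0) ≠ 0)]
      rw [if_neg (fun he => hc he.symm)]
      ring

/-- Vandermonde in the first factor: a bihomogeneous form of degree (n,m) vanishing at
more than n points of a horizontal line vanishes on the whole line. -/
lemma vandermonde_col (F : S2 k) {n m : ℕ} (hF : IsWeightedHomogeneous bw F ((n, m) : ℕ × ℕ))
    (y : P1 k) (S : Finset (P1 k)) (hcard : n < S.card)
    (hvan : ∀ x ∈ S, evalPt ((x, y) : PtQ k) F = 0) (x : P1 k) :
    evalPt ((x, y) : PtQ k) F = 0 := by
  obtain ⟨qq, hdeg, hfin, hinf⟩ := evalPt_form F hF y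
  set Sinf := S.filter (fun z : P1 k => Projectivization.rep z 0 = 0) with hSinf
  have hSinfcard : Sinf.card ≤ 1 := by
    rw [Finset.card_le_one]
    intro a ha b hb
    rw [hSinf, Finset.mem_filter] at ha hb
    exact inf_unique ha.2 hb.2
  have hroots : ∀ s ∈ (S \ Sinf).image (fun z : P1 k => z.rep 1 / z.rep 0), qq.eval s = 0 := by
    intro s hs
    rcases Finset.mem_image.mp hs with ⟨z, hz, rfl⟩
    rw [Finset.mem_sdiff, hSinf, Finset.mem_filter] at hz
    have hz0 : z.rep 0 ≠ 0 := fun h => hz.2 ⟨hz.1, h⟩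
    have := hvan z hz.1
    rw [hfin z hz0] at this
    rcases mul_eq_zero.mp this with h | h
    · exact absurd h (pow_ne_zero _ hz0)
    · exact h
  have hinjcard : ((S \ Sinf).image (fun z : P1 k => z.rep 1 / z.rep 0)).card
      = (S \ Sinf).card := by
    apply Finset.card_image_of_injOn
    intro a ha b hb hab
    rw [Finset.coe_sdiff] at *
    have ha' : a ∈ S \ Sinf := by simpa using ha
    have hb' : b ∈ S \ Sinf := by simpa using hb
    rw [Finset.mem_sdiff, hSinf, Finset.mem_filter] at ha' hb'
    exact slope_injOn (fun h => ha'.2 ⟨ha'.1, h⟩) (fun h => hb'.2 ⟨hb'.1, h⟩) hab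
  have hsdcard : (S \ Sinf).card = S.card - Sinf.card :=
    Finset.card_sdiff_of_subset (Finset.filter_subset _ _)
  have hqq : qq = 0 := by
    by_cases hSe : Sinf = ∅
    · apply Polynomial.eq_zero_of_natDegree_lt_card_of_eval_eq_zero' qq _ hroots
      rw [hinjcard, hsdcard, hSe]
      simp only [Finset.card_empty, Nat.sub_zero]
      omega
    · obtain ⟨z0, hz0⟩ := Finset.nonempty_of_ne_empty hSe
      have hz0' := hz0
      rw [hSinf, Finset.mem_filter] at hz0'
      have hcn : qq.coeff n = 0 := by
        have := hvan z0 hz0'.1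
        rw [hinf z0 hz0'.2] at this
        rcases mul_eq_zero.mp this with h | h
        · exact h
        · exact absurd h (pow_ne_zero _ (rep1_ne_zero hz0'.2))
      by_cases h0 : qq = 0
      · exact h0
      · exfalso
        have hne : qq.natDegree ≠ n := by
          intro he
          exact (Polynomial.leadingCoeff_ne_zero.mpr h0) (by rwa [Polynomial.leadingCoeff, he])
        apply h0
        apply Polynomial.eq_zero_of_natDegree_lt_card_of_eval_eq_zero' qq _ hroots
        rw [hinjcard, hsdcard]
        omega
  by_cases hx : x.rep 0 = 0
  · rw [hinf x hx, hqq]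
    simp
  · rw [hfin x hx, hqq]
    simp

end
end Stmt14Aux

namespace Stmt14Aux
open MvPolynomial Projectivization
attribute [local instance] Classical.propDecidable
noncomputable section

variable {k : Type} [Field k]

lemma evalPt_form_y (F : S2 k) {n m : ℕ} (hF : IsWeightedHomogeneous bw F ((n, m) : ℕ × ℕ))
    (x : P1 k) :
    ∃ qq : Polynomial k, qq.natDegree ≤ m ∧
      (∀ y : P1 k, y.rep 0 ≠ 0 →
        evalPt ((x, y) : PtQ k) F = y.rep 0 ^ m * qq.eval (y.rep 1 / y.rep 0)) ∧
      (∀ y : P1 k, y.rep 0 = 0 →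
        evalPt ((x, y) : PtQ k) F = qq.coeff m * y.rep 1 ^ m) := by
  have hsupp : ∀ d ∈ F.support, d (Sum.inr 0) + d (Sum.inr 1) = m := by
    intro d hd
    have h1 := hF (MvPolynomial.mem_support_iff.mp hd)
    rw [bw_weight] at h1
    exact (Prod.ext_iff.mp h1).2
  refine ⟨∑ d ∈ F.support, Polynomial.C (coeff d F *
      (x.rep 0 ^ d (Sum.inl 0) * x.rep 1 ^ d (Sum.inl 1))) * Polynomial.X ^ (d (Sum.inr 1)),
    ?_, ?_, ?_⟩
  · apply Polynomial.natDegree_sum_le_of_forall_le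
    intro d hd
    refine le_trans (Polynomial.natDegree_C_mul_le _ _) ?_
    rw [Polynomial.natDegree_X_pow]
    have := hsupp d hd
    omega
  · intro y hy
    rw [evalPt_pair, Polynomial.eval_finset_sum, Finset.mul_sum]
    apply Finset.sum_congr rfl
    intro d hd
    simp only [Polynomial.eval_mul, Polynomial.eval_C, Polynomial.eval_pow, Polynomial.eval_X]
    have h2 := hsupp d hd
    have hyn : y.rep 0 ^ m = y.rep 0 ^ d (Sum.inr 0) * y.rep 0 ^ d (Sum.inr 1) := by
      rw [← pow_add]
      congr 1
      omega
    rw [div_pow, hyn]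
    have hpow : y.rep 0 ^ d (Sum.inr 1) ≠ 0 := pow_ne_zero _ hy
    field_simp
  · intro y hy
    rw [evalPt_pair, Polynomial.finset_sum_coeff, Finset.sum_mul]
    apply Finset.sum_congr rfl
    intro d hd
    simp only [Polynomial.coeff_C_mul, Polynomial.coeff_X_pow]
    have h2 := hsupp d hd
    rw [hy]
    by_cases hc : d (Sum.inr 1) = m
    · have h0 : d (Sum.inr 0) = 0 := by omega
      rw [h0, hc]
      simp
      ring
    · have h0 : 0 < d (Sum.inr 0) := by omega
      rw [zero_pow (by omega : d (Sum.inr 0) ≠ 0)]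
      rw [if_neg (fun he => hc he.symm)]
      ring

lemma vandermonde_row (F : S2 k) {n m : ℕ} (hF : IsWeightedHomogeneous bw F ((n, m) : ℕ × ℕ))
    (x : P1 k) (S : Finset (P1 k)) (hcard : m < S.card)
    (hvan : ∀ y ∈ S, evalPt ((x, y) : PtQ k) F = 0) (y : P1 k) :
    evalPt ((x, y) : PtQ k) F = 0 := by
  obtain ⟨qq, hdeg, hfin, hinf⟩ := evalPt_form_y F hF x
  set Sinf := S.filter (fun z : P1 k => Projectivization.rep z 0 = 0) with hSinf
  have hroots : ∀ s ∈ (S \ Sinf).image (fun z : P1 k => z.rep 1 / z.rep 0), qq.eval s = 0 := by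
    intro s hs
    rcases Finset.mem_image.mp hs with ⟨z, hz, rfl⟩
    rw [Finset.mem_sdiff, hSinf, Finset.mem_filter] at hz
    have hz0 : z.rep 0 ≠ 0 := fun h => hz.2 ⟨hz.1, h⟩
    have := hvan z hz.1
    rw [hfin z hz0] at this
    rcases mul_eq_zero.mp this with h | h
    · exact absurd h (pow_ne_zero _ hz0)
    · exact h
  have hinjcard : ((S \ Sinf).image (fun z : P1 k => z.rep 1 / z.rep 0)).card
      = (S \ Sinf).card := by
    apply Finset.card_image_of_injOn
    intro a ha b hb hab
    have ha' : a ∈ S \ Sinf := by simpa using ha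
    have hb' : b ∈ S \ Sinf := by simpa using hb
    rw [Finset.mem_sdiff, hSinf, Finset.mem_filter] at ha' hb'
    exact slope_injOn (fun h => ha'.2 ⟨ha'.1, h⟩) (fun h => hb'.2 ⟨hb'.1, h⟩) hab
  have hSinfcard : Sinf.card ≤ 1 := by
    rw [Finset.card_le_one]
    intro a ha b hb
    rw [hSinf, Finset.mem_filter] at ha hb
    exact inf_unique ha.2 hb.2
  have hsdcard : (S \ Sinf).card = S.card - Sinf.card :=
    Finset.card_sdiff_of_subset (Finset.filter_subset _ _)
  have hqq : qq = 0 := by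
    by_cases hSe : Sinf = ∅
    · apply Polynomial.eq_zero_of_natDegree_lt_card_of_eval_eq_zero' qq _ hroots
      rw [hinjcard, hsdcard, hSe]
      simp only [Finset.card_empty, Nat.sub_zero]
      omega
    · obtain ⟨z0, hz0⟩ := Finset.nonempty_of_ne_empty hSe
      have hz0' := hz0
      rw [hSinf, Finset.mem_filter] at hz0'
      have hcn : qq.coeff m = 0 := by
        have := hvan z0 hz0'.1
        rw [hinf z0 hz0'.2] at this
        rcases mul_eq_zero.mp this with h | h
        · exact h
        · exact absurd h (pow_ne_zero _ (rep1_ne_zero hz0'.2))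
      by_cases h0 : qq = 0
      · exact h0
      · exfalso
        have hne : qq.natDegree ≠ m := by
          intro he
          exact (Polynomial.leadingCoeff_ne_zero.mpr h0) (by rwa [Polynomial.leadingCoeff, he])
        apply h0
        apply Polynomial.eq_zero_of_natDegree_lt_card_of_eval_eq_zero' qq _ hroots
        rw [hinjcard, hsdcard]
        omega
  by_cases hy : y.rep 0 = 0
  · rw [hinf y hy, hqq]
    simp
  · rw [hfin y hy, hqq]
    simp

/-! ### Linear forms vanishing on rows and columns -/

/-- The (1,0)-form vanishing exactly on the vertical "row" {r} × P¹. -/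
def lf (r : P1 k) : S2 k :=
  (r.rep 1) • (X (Sum.inl 0) : S2 k) - (r.rep 0) • (X (Sum.inl 1) : S2 k)

/-- The (0,1)-form vanishing exactly on P¹ × {c}. -/
def mf (c : P1 k) : S2 k :=
  (c.rep 1) • (X (Sum.inr 0) : S2 k) - (c.rep 0) • (X (Sum.inr 1) : S2 k)

lemma lf_WH (r : P1 k) : IsWeightedHomogeneous bw (lf r) ((1, 0) : ℕ × ℕ) := by
  rw [← mem_weightedHomogeneousSubmodule]
  apply Submodule.sub_mem <;> apply Submodule.smul_mem <;>
    · rw [mem_weightedHomogeneousSubmodule]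
      have := isWeightedHomogeneous_X k bw (Sum.inl 0 : BiVar)
      have := isWeightedHomogeneous_X k bw (Sum.inl 1 : BiVar)
      first
        | exact (by simpa [bw] using isWeightedHomogeneous_X k bw (Sum.inl 0 : BiVar))
        | exact (by simpa [bw] using isWeightedHomogeneous_X k bw (Sum.inl 1 : BiVar))

lemma mf_WH (c : P1 k) : IsWeightedHomogeneous bw (mf c) ((0, 1) : ℕ × ℕ) := by
  rw [← mem_weightedHomogeneousSubmodule]
  apply Submodule.sub_mem <;> apply Submodule.smul_mem <;>
    · rw [mem_weightedHomogeneousSubmodule]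
      first
        | exact (by simpa [bw] using isWeightedHomogeneous_X k bw (Sum.inr 0 : BiVar))
        | exact (by simpa [bw] using isWeightedHomogeneous_X k bw (Sum.inr 1 : BiVar))

lemma evalPt_lf (r : P1 k) (x y : P1 k) :
    evalPt ((x, y) : PtQ k) (lf r) = r.rep 1 * x.rep 0 - r.rep 0 * x.rep 1 := by
  simp [lf, evalPt, MvPolynomial.smul_eq_C_mul]

lemma evalPt_mf (c : P1 k) (x y : P1 k) :
    evalPt ((x, y) : PtQ k) (mf c) = c.rep 1 * y.rep 0 - c.rep 0 * y.rep 1 := by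
  simp [mf, evalPt, MvPolynomial.smul_eq_C_mul]

lemma cross_eq_zero_iff (r x : P1 k) :
    r.rep 1 * x.rep 0 - r.rep 0 * x.rep 1 = 0 ↔ x = r := by
  constructor
  · intro h
    by_cases hr : r.rep 0 = 0
    · have hr1 := rep1_ne_zero hr
      have hx0 : x.rep 0 = 0 := by
        rw [hr] at h
        rcases mul_eq_zero.mp (by linear_combination h : r.rep 1 * x.rep 0 = 0) with h' | h'
        · exact absurd h' hr1
        · exact h'
      exact inf_unique hx0 hr
    · refine P1_eq_of_smul (x.rep 0 / r.rep 0) ?_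
      funext i
      fin_cases i
      · show x.rep 0 / r.rep 0 * r.rep 0 = x.rep 0
        field_simp
      · show x.rep 0 / r.rep 0 * r.rep 1 = x.rep 1
        rw [div_mul_eq_mul_div, div_eq_iff hr]
        linear_combination h
  · rintro rfl
    ring

lemma evalPt_lf_eq_zero_iff (r : P1 k) (x y : P1 k) :
    evalPt ((x, y) : PtQ k) (lf r) = 0 ↔ x = r := by
  rw [evalPt_lf, cross_eq_zero_iff]

lemma evalPt_mf_eq_zero_iff (c : P1 k) (x y : P1 k) :
    evalPt ((x, y) : PtQ k) (mf c) = 0 ↔ y = c := by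
  rw [evalPt_mf, cross_eq_zero_iff]

/-! ### Products of linear forms -/

def lfProd (f : ℕ → P1 k) (A : Finset ℕ) : S2 k := ∏ a ∈ A, lf (f a)

def mfProd (f : ℕ → P1 k) (A : Finset ℕ) : S2 k := ∏ a ∈ A, mf (f a)

lemma lfProd_WH (f : ℕ → P1 k) (A : Finset ℕ) :
    IsWeightedHomogeneous bw (lfProd f A) ((A.card, 0) : ℕ × ℕ) := by
  have := IsWeightedHomogeneous.prod A (fun a => lf (f a)) (fun _ => ((1, 0) : ℕ × ℕ))
    (fun a _ => lf_WH (f a))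
  rw [Finset.sum_const] at this
  convert this using 2 <;> simp [Prod.ext_iff, lfProd]

lemma mfProd_WH (f : ℕ → P1 k) (A : Finset ℕ) :
    IsWeightedHomogeneous bw (mfProd f A) ((0, A.card) : ℕ × ℕ) := by
  have := IsWeightedHomogeneous.prod A (fun a => mf (f a)) (fun _ => ((0, 1) : ℕ × ℕ))
    (fun a _ => mf_WH (f a))
  rw [Finset.sum_const] at this
  convert this using 2 <;> simp [Prod.ext_iff, mfProd]

lemma evalPt_lfProd (f : ℕ → P1 k) (A : Finset ℕ) (x y : P1 k) :
    evalPt ((x, y) : PtQ k) (lfProd f A) = ∏ a ∈ A, evalPt ((x, y) : PtQ k) (lf (f a)) :=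
  map_prod _ _ _

lemma evalPt_mfProd (f : ℕ → P1 k) (A : Finset ℕ) (x y : P1 k) :
    evalPt ((x, y) : PtQ k) (mfProd f A) = ∏ a ∈ A, evalPt ((x, y) : PtQ k) (mf (f a)) :=
  map_prod _ _ _

/-! ### Pad forms -/

lemma pivot_spec {v : Fin 2 → k} (hv : v ≠ 0) : v (pivot v) ≠ 0 := by
  rw [pivot]
  split
  · assumption
  · rename_i h
    intro h1
    apply hv
    funext i
    fin_cases i
    · simpa using not_not.mp (by simpa using h)
    · simpa using h1

def xpad (P : PtQ k) : S2 k := X (Sum.inl (pivot P.1.rep))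

def ypad (P : PtQ k) : S2 k := X (Sum.inr (pivot P.2.rep))

lemma xpad_WH (P : PtQ k) : IsWeightedHomogeneous bw (xpad P) ((1, 0) : ℕ × ℕ) := by
  simpa [bw, xpad] using isWeightedHomogeneous_X k bw (Sum.inl (pivot P.1.rep) : BiVar)

lemma ypad_WH (P : PtQ k) : IsWeightedHomogeneous bw (ypad P) ((0, 1) : ℕ × ℕ) := by
  simpa [bw, ypad] using isWeightedHomogeneous_X k bw (Sum.inr (pivot P.2.rep) : BiVar)

lemma evalPt_xpad (P : PtQ k) (x y : P1 k) :
    evalPt ((x, y) : PtQ k) (xpad P) = x.rep (pivot P.1.rep) := by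
  simp [xpad, evalPt]

lemma evalPt_ypad (P : PtQ k) (x y : P1 k) :
    evalPt ((x, y) : PtQ k) (ypad P) = y.rep (pivot P.2.rep) := by
  simp [ypad, evalPt]

lemma pow_WH {f : S2 k} {d : ℕ × ℕ} (hf : IsWeightedHomogeneous bw f d) (e : ℕ) :
    IsWeightedHomogeneous bw (f ^ e) ((e * d.1, e * d.2) : ℕ × ℕ) := by
  induction e with
  | zero =>
      simp only [pow_zero, zero_mul]
      exact isWeightedHomogeneous_one k bw
  | succ t ih =>
      have := ih.mul hf
      rw [pow_succ]
      convert this using 2 <;> simp [Prod.ext_iff] <;> ring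

end
end Stmt14Aux

namespace Stmt14Aux
open MvPolynomial Projectivization
attribute [local instance] Classical.propDecidable
noncomputable section

variable {k : Type} [Field k]

def ptOf (T : Staircase k) (p : ℕ × ℕ) : PtQ k := (T.R p.1, T.C p.2)

lemma ptOf_inj (T : Staircase k) {p p' : ℕ × ℕ} (hp : p ∈ T.D) (hp' : p' ∈ T.D)
    (he : ptOf T p = ptOf T p') : p = p' := by
  have h1 := T.bound p hp
  have h2 := T.bound p' hp'
  have hr : p.1 = p'.1 := T.hR p.1 h1.1 p'.1 h2.1 (congrArg Prod.fst he)
  have hc : p.2 = p'.2 := T.hC p.2 h1.2 p'.2 h2.2 (congrArg Prod.snd he)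
  cases p; cases p'
  simp_all

/-- Primed general-point versions of the evaluation lemmas. -/
lemma evalPt_lf_eq_zero_iff' (r : P1 k) (z : PtQ k) :
    evalPt z (lf r) = 0 ↔ z.1 = r := by
  cases z with
  | mk x y => exact evalPt_lf_eq_zero_iff r x y

lemma evalPt_mf_eq_zero_iff' (c : P1 k) (z : PtQ k) :
    evalPt z (mf c) = 0 ↔ z.2 = c := by
  cases z with
  | mk x y => exact evalPt_mf_eq_zero_iff c x y

lemma evalPt_lfProd' (f : ℕ → P1 k) (A : Finset ℕ) (z : PtQ k) :
    evalPt z (lfProd f A) = ∏ a ∈ A, evalPt z (lf (f a)) :=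
  map_prod _ _ _

lemma evalPt_mfProd' (f : ℕ → P1 k) (A : Finset ℕ) (z : PtQ k) :
    evalPt z (mfProd f A) = ∏ a ∈ A, evalPt z (mf (f a)) :=
  map_prod _ _ _

lemma evalPt_xpad' (P : PtQ k) (z : PtQ k) :
    evalPt z (xpad P) = z.1.rep (pivot P.1.rep) := by
  simp [xpad, evalPt]

lemma evalPt_ypad' (P : PtQ k) (z : PtQ k) :
    evalPt z (ypad P) = z.2.rep (pivot P.2.rep) := by
  simp [ypad, evalPt]

def colRows (T : Staircase k) (jl : ℕ) : Finset ℕ :=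
  (T.D.filter (fun p => p.2 = jl)).image Prod.fst

def rowCols (T : Staircase k) (il : ℕ) : Finset ℕ :=
  (T.D.filter (fun p => p.1 = il)).image Prod.snd

lemma mem_colRows {T : Staircase k} {jl a : ℕ} : a ∈ colRows T jl ↔ (a, jl) ∈ T.D := by
  simp only [colRows, Finset.mem_image, Finset.mem_filter]
  constructor
  · rintro ⟨⟨a', b'⟩, ⟨hD, hb⟩, rfl⟩
    obtain rfl : b' = jl := hb
    exact hD
  · intro h
    exact ⟨(a, jl), ⟨h, rfl⟩, rfl⟩

lemma mem_rowCols {T : Staircase k} {il b : ℕ} : b ∈ rowCols T il ↔ (il, b) ∈ T.D := by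
  simp only [rowCols, Finset.mem_image, Finset.mem_filter]
  constructor
  · rintro ⟨⟨a', b'⟩, ⟨hD, ha⟩, rfl⟩
    obtain rfl : a' = il := ha
    exact hD
  · intro h
    exact ⟨(il, b), ⟨h, rfl⟩, rfl⟩

lemma colRows_card (T : Staircase k) (jl : ℕ) : (colRows T jl).card = T.colCount jl := by
  rw [colRows, Staircase.colCount]
  apply Finset.card_image_of_injOn
  intro u hu v hv huv
  rw [Finset.coe_filter] at hu hv
  simp only [Set.mem_setOf_eq] at hu hv
  cases u; cases v
  simp_all

lemma rowCols_card (T : Staircase k) (il : ℕ) : (rowCols T il).card = T.rowCount il := by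
  rw [rowCols, Staircase.rowCount]
  apply Finset.card_image_of_injOn
  intro u hu v hv huv
  rw [Finset.coe_filter] at hu hv
  simp only [Set.mem_setOf_eq] at hu hv
  cases u; cases v
  simp_all

/-! ### Separators -/

def sep (T : Staircase k) (il jl i j : ℕ) : S2 k :=
  lfProd T.R ((colRows T jl).erase il) * mfProd T.C ((rowCols T il).erase jl) *
    xpad (ptOf T (il, jl)) ^ (i - ((colRows T jl).erase il).card) *
    ypad (ptOf T (il, jl)) ^ (j - ((rowCols T il).erase jl).card)

lemma sep_WH (T : Staircase k) (il jl i j : ℕ)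
    (hqi : ((colRows T jl).erase il).card ≤ i)
    (hpj : ((rowCols T il).erase jl).card ≤ j) :
    IsWeightedHomogeneous bw (sep T il jl i j) ((i, j) : ℕ × ℕ) := by
  have h1 := lfProd_WH T.R ((colRows T jl).erase il)
  have h2 := mfProd_WH T.C ((rowCols T il).erase jl)
  have h3 := pow_WH (xpad_WH (ptOf T (il, jl))) (i - ((colRows T jl).erase il).card)
  have h4 := pow_WH (ypad_WH (ptOf T (il, jl))) (j - ((rowCols T il).erase jl).card)
  have := ((h1.mul h2).mul h3).mul h4
  rw [sep]
  convert this using 2 <;> simp [Prod.ext_iff] <;> omega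

lemma sep_vanish (T : Staircase k) {il jl a b : ℕ} (i j : ℕ)
    (hil : (il, jl) ∈ T.D) (hab : (a, b) ∈ T.D) (hne : (a, b) ≠ (il, jl)) :
    evalPt (ptOf T (a, b)) (sep T il jl i j) = 0 := by
  have hzero : (∃ a' ∈ (colRows T jl).erase il,
      evalPt (ptOf T (a, b)) (lf (T.R a')) = 0) ∨
      (∃ b' ∈ (rowCols T il).erase jl, evalPt (ptOf T (a, b)) (mf (T.C b')) = 0) := by
    by_cases hmem : a ∈ (colRows T jl).erase il
    · exact Or.inl ⟨a, hmem, (evalPt_lf_eq_zero_iff' _ _).mpr rfl⟩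
    · by_cases hmem' : b ∈ (rowCols T il).erase jl
      · exact Or.inr ⟨b, hmem', (evalPt_mf_eq_zero_iff' _ _).mpr rfl⟩
      · exfalso
        rw [Finset.mem_erase, mem_colRows] at hmem
        rw [Finset.mem_erase, mem_rowCols] at hmem'
        by_cases hail : a = il
        · subst hail
          have hbn : b ≠ jl := fun hb => hne (by rw [hb])
          exact hmem' ⟨hbn, hab⟩
        · have haD : (a, jl) ∉ T.D := fun hD => hmem ⟨hail, hD⟩
          by_cases hjb : jl ≤ b
          · exact haD (T.lower (a, b) hab (a, jl) le_rfl hjb)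
          · have : (il, b) ∈ T.D := T.lower (il, jl) hil (il, b) le_rfl (by omega)
            have hbjl : b ≠ jl := by omega
            exact hmem' ⟨hbjl, this⟩
  rw [sep, map_mul, map_mul, map_mul]
  rcases hzero with ⟨a', ha', hz⟩ | ⟨b', hb', hz⟩
  · rw [evalPt_lfProd', Finset.prod_eq_zero ha' hz]
    ring
  · rw [evalPt_mfProd', Finset.prod_eq_zero hb' hz]
    ring

lemma sep_nonzero (T : Staircase k) {il jl : ℕ} (i j : ℕ) (hil : (il, jl) ∈ T.D) :
    evalPt (ptOf T (il, jl)) (sep T il jl i j) ≠ 0 := by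
  have hbound := T.bound _ hil
  rw [sep, map_mul, map_mul, map_mul]
  apply mul_ne_zero
  apply mul_ne_zero
  apply mul_ne_zero
  · rw [evalPt_lfProd']
    rw [Finset.prod_ne_zero_iff]
    intro a' ha'
    rw [Finset.mem_erase, mem_colRows] at ha'
    intro he
    rw [evalPt_lf_eq_zero_iff'] at he
    have he' : T.R il = T.R a' := he
    have hb' := T.bound _ ha'.2
    exact ha'.1 (T.hR a' hb'.1 il hbound.1 he'.symm)
  · rw [evalPt_mfProd']
    rw [Finset.prod_ne_zero_iff]
    intro b' hb'
    rw [Finset.mem_erase, mem_rowCols] at hb'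
    intro he
    rw [evalPt_mf_eq_zero_iff'] at he
    have he' : T.C jl = T.C b' := he
    have hbb := T.bound _ hb'.2
    exact hb'.1 (T.hC b' hbb.2 jl hbound.2 he'.symm)
  · rw [map_pow, evalPt_xpad']
    exact pow_ne_zero _ (pivot_spec (Projectivization.rep_nonzero _))
  · rw [map_pow, evalPt_ypad']
    exact pow_ne_zero _ (pivot_spec (Projectivization.rep_nonzero _))

end
end Stmt14Aux

namespace Stmt14Aux
open MvPolynomial Projectivization
attribute [local instance] Classical.propDecidable
noncomputable section

variable {k : Type} [Field k]

lemma surj_of_diag {V : Type} [AddCommGroup V] [Module k V] {ι : Type} [Fintype ι]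
    (ψ : V →ₗ[k] (ι → k))
    (hd : ∀ g : ι, ∃ F : V, ψ F g ≠ 0 ∧ ∀ g', g' ≠ g → ψ F g' = 0) :
    Function.Surjective ψ := by
  rw [← LinearMap.range_eq_top, eq_top_iff]
  intro f _
  choose F hF0 hF using hd
  have hrep : f = ∑ g : ι, (f g / ψ (F g) g) • ψ (F g) := by
    funext g'
    simp only [Finset.sum_apply, Pi.smul_apply, smul_eq_mul]
    rw [Finset.sum_eq_single g']
    · exact (div_mul_cancel₀ _ (hF0 g')).symm
    · intro b _ hb
      rw [hF b g' (Ne.symm hb)]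
      ring
    · intro hg'
      exact absurd (Finset.mem_univ g') hg'
  rw [hrep]
  exact Submodule.sum_mem _ fun g _ =>
    Submodule.smul_mem _ _ (LinearMap.mem_range_self ψ (F g))

set_option synthInstance.maxHeartbeats 1000000 in
lemma finrank_le_of_le {P Q : Submodule k (S2 k)} (hle : P ≤ Q) (hQ : FiniteDimensional k Q) :
    Module.finrank k P ≤ Module.finrank k Q := by
  haveI := hQ
  calc Module.finrank k P
      = Module.finrank k (Submodule.comap Q.subtype P) :=
        (Submodule.comapSubtypeEquivOfLe hle).finrank_eq.symm
    _ ≤ Module.finrank k Q := Submodule.finrank_le _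

set_option synthInstance.maxHeartbeats 1000000 in
set_option maxHeartbeats 2000000 in
/-- The main dimension identity. -/
lemma key_dim (T : Staircase k) (h : ℕ) (pt : Fin h → ℕ × ℕ)
    (hmem : ∀ l, T.Interior (pt l).1 (pt l).2)
    (hrow : ∀ l l', (pt l).1 = (pt l').1 → l = l')
    (hcol : ∀ l l', (pt l).2 = (pt l').2 → l = l')
    (q p : Fin h → ℕ)
    (hq : ∀ l, T.colCount (pt l).2 = q l + 1)
    (hp : ∀ l, T.rowCount (pt l).1 = p l + 1) (i j : ℕ) :
    Module.finrank k (Kd ((T.D \ Finset.univ.image pt).image (fun p => (T.R p.1, T.C p.2)))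
        ((i, j) : ℕ × ℕ)) =
      Module.finrank k (Kd T.pts ((i, j) : ℕ × ℕ)) +
        (Finset.univ.filter (fun l : Fin h => q l ≤ i ∧ p l ≤ j)).card := by
  classical
  set E : Finset (ℕ × ℕ) := Finset.univ.image pt with hE
  set WX : Finset (PtQ k) := T.pts with hWX
  set WZ : Finset (PtQ k) := (T.D \ E).image (fun p => (T.R p.1, T.C p.2)) with hWZ
  set dg : ℕ × ℕ := (i, j) with hdg
  set Good : Finset (Fin h) := Finset.univ.filter (fun l : Fin h => q l ≤ i ∧ p l ≤ j)
    with hGood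
  have hptD : ∀ l, pt l ∈ T.D := by
    intro l
    have := (hmem l).1
    rwa [Prod.mk.eta] at this
  have hptE : ∀ l, pt l ∈ E := fun l => Finset.mem_image.mpr ⟨l, Finset.mem_univ l, rfl⟩
  have hptne : ∀ l l', l ≠ l' → pt l ≠ pt l' := by
    intro l l' hne he
    exact hne (hrow l l' (by rw [he]))
  have hWZ' : WZ = (T.D \ E).image (ptOf T) := rfl
  have hWXmem : ∀ pp ∈ T.D, ptOf T pp ∈ WX := by
    intro pp hpp
    exact Finset.mem_image.mpr ⟨pp, hpp, rfl⟩
  have hWZmem : ∀ pp ∈ T.D, pp ∉ E → ptOf T pp ∈ WZ := by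
    intro pp hpp hppE
    rw [hWZ']
    exact Finset.mem_image.mpr ⟨pp, Finset.mem_sdiff.mpr ⟨hpp, hppE⟩, rfl⟩
  have hsub : WZ ⊆ WX := by
    rw [hWZ', hWX]
    intro x hx
    rcases Finset.mem_image.mp hx with ⟨pp, hpp, rfl⟩
    exact hWXmem pp (Finset.mem_sdiff.mp hpp).1
  have hKle : Kd WX dg ≤ Kd WZ dg := by
    intro f hf
    rcases mem_Kd.mp hf with ⟨h1, h2⟩
    exact mem_Kd.mpr ⟨h1, fun x hx => h2 x (hsub hx)⟩
  have hFD : FiniteDimensional k (weightedHomogeneousSubmodule k bw dg) := WH_fd i j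
  have hFDZ : FiniteDimensional k (Kd WZ dg) :=
    Submodule.finiteDimensional_of_le (inf_le_left : Kd WZ dg ≤ _)
  have hqcard : ∀ l, ((colRows T (pt l).2).erase (pt l).1).card = q l := by
    intro l
    rw [Finset.card_erase_of_mem (mem_colRows.mpr (by rw [Prod.mk.eta]; exact hptD l))]
    rw [colRows_card, hq l]
    omega
  have hpcard : ∀ l, ((rowCols T (pt l).1).erase (pt l).2).card = p l := by
    intro l
    rw [Finset.card_erase_of_mem (mem_rowCols.mpr (by rw [Prod.mk.eta]; exact hptD l))]
    rw [rowCols_card, hp l]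
    omega
  set ψ : (Kd WZ dg) →ₗ[k] (↥Good → k) :=
    LinearMap.pi (fun l : ↥Good => (evalLin (ptOf T (pt l.1))).comp (Submodule.subtype _))
    with hψ
  have hψap : ∀ (F : Kd WZ dg) (l : ↥Good), ψ F l = evalPt (ptOf T (pt l.1)) F.1 := by
    intro F l
    rfl
  have hsurj : Function.Surjective ψ := by
    apply surj_of_diag
    intro l
    have hlG := Finset.mem_filter.mp l.2
    have hsepWH : IsWeightedHomogeneous bw (sep T (pt l.1).1 (pt l.1).2 i j) dg := by
      apply sep_WH
      · rw [hqcard l.1]; exact hlG.2.1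
      · rw [hpcard l.1]; exact hlG.2.2
    have hsepvan : ∀ x ∈ WZ, evalPt x (sep T (pt l.1).1 (pt l.1).2 i j) = 0 := by
      intro x hx
      rw [hWZ'] at hx
      rcases Finset.mem_image.mp hx with ⟨pp, hpp, rfl⟩
      rcases Finset.mem_sdiff.mp hpp with ⟨hppD, hppE⟩
      obtain ⟨a, b⟩ := pp
      apply sep_vanish T i j (by rw [Prod.mk.eta]; exact hptD l.1) hppD
      intro he
      apply hppE
      rw [he, Prod.mk.eta]
      exact hptE l.1
    refine ⟨⟨sep T (pt l.1).1 (pt l.1).2 i j, mem_Kd.mpr ⟨hsepWH, hsepvan⟩⟩, ?_, ?_⟩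
    · rw [hψap]
      have := sep_nonzero T i j (by rw [Prod.mk.eta]; exact hptD l.1)
      simpa [Prod.mk.eta] using this
    · intro l' hl'
      rw [hψap]
      have hne : pt l'.1 ≠ pt l.1 := hptne l'.1 l.1 (fun he => hl' (Subtype.ext he))
      have := sep_vanish T (il := (pt l.1).1) (jl := (pt l.1).2)
        (a := (pt l'.1).1) (b := (pt l'.1).2) i j
        (by rw [Prod.mk.eta]; exact hptD l.1) (by rw [Prod.mk.eta]; exact hptD l'.1)
        (by rw [Prod.mk.eta, Prod.mk.eta]; exact hne)
      simpa [Prod.mk.eta] using this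
  have hker : LinearMap.ker ψ = Submodule.comap (Kd WZ dg).subtype (Kd WX dg) := by
    ext F
    rw [LinearMap.mem_ker, Submodule.mem_comap]
    constructor
    · intro hF
      have hgood : ∀ l : ↥Good, evalPt (ptOf T (pt l.1)) F.1 = 0 := by
        intro l
        have := congrFun hF l
        rwa [hψap] at this
      rcases mem_Kd.mp F.2 with ⟨hWH, hvanZ⟩
      rw [Submodule.coe_subtype]
      refine mem_Kd.mpr ⟨hWH, ?_⟩
      intro x hx
      rw [hWX, Staircase.pts] at hx
      rcases Finset.mem_image.mp hx with ⟨pp, hppD, rfl⟩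
      show evalPt (ptOf T pp) F.1 = 0
      by_cases hEab : pp ∈ E
      · rcases Finset.mem_image.mp hEab with ⟨l, -, hle⟩
        subst hle
        by_cases hg : q l ≤ i ∧ p l ≤ j
        · exact hgood ⟨l, Finset.mem_filter.mpr ⟨Finset.mem_univ l, hg⟩⟩
        · rcases not_and_or.mp hg with hbad | hbad
          · push_neg at hbad
            have hcardS : (((colRows T (pt l).2).erase (pt l).1).image T.R).card = q l := by
              rw [Finset.card_image_of_injOn, hqcard l]
              intro u hu v hv huv
              have hu' := Finset.mem_erase.mp hu
              have hv' := Finset.mem_erase.mp hv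
              exact T.hR u (T.bound _ (mem_colRows.mp hu'.2)).1 v
                (T.bound _ (mem_colRows.mp hv'.2)).1 huv
            have hvanS : ∀ x' ∈ ((colRows T (pt l).2).erase (pt l).1).image T.R,
                evalPt ((x', T.C (pt l).2) : PtQ k) F.1 = 0 := by
              intro x' hx'
              rcases Finset.mem_image.mp hx' with ⟨a', ha', rfl⟩
              rcases Finset.mem_erase.mp ha' with ⟨hane, haD⟩
              have haE : ((a', (pt l).2) : ℕ × ℕ) ∉ E := by
                intro hEm
                rcases Finset.mem_image.mp hEm with ⟨m, -, hme⟩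
                have hml : m = l := hcol m l (by rw [hme])
                subst hml
                exact hane (congrArg Prod.fst hme).symm
              exact hvanZ _ (hWZmem ((a', (pt l).2)) (mem_colRows.mp haD) haE)
            exact vandermonde_col F.1 hWH (T.C (pt l).2)
              (((colRows T (pt l).2).erase (pt l).1).image T.R)
              (by rw [hcardS]; omega) hvanS (T.R (pt l).1)
          · push_neg at hbad
            have hcardS : (((rowCols T (pt l).1).erase (pt l).2).image T.C).card = p l := by
              rw [Finset.card_image_of_injOn, hpcard l]
              intro u hu v hv huv
              have hu' := Finset.mem_erase.mp hu
              have hv' := Finset.mem_erase.mp hv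
              exact T.hC u (T.bound _ (mem_rowCols.mp hu'.2)).2 v
                (T.bound _ (mem_rowCols.mp hv'.2)).2 huv
            have hvanS : ∀ y' ∈ ((rowCols T (pt l).1).erase (pt l).2).image T.C,
                evalPt ((T.R (pt l).1, y') : PtQ k) F.1 = 0 := by
              intro y' hy'
              rcases Finset.mem_image.mp hy' with ⟨b', hb', rfl⟩
              rcases Finset.mem_erase.mp hb' with ⟨hbne, hbD⟩
              have hbE : (((pt l).1, b') : ℕ × ℕ) ∉ E := by
                intro hEm
                rcases Finset.mem_image.mp hEm with ⟨m, -, hme⟩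
                have hml : m = l := hrow m l (by rw [hme])
                subst hml
                exact hbne (congrArg Prod.snd hme).symm
              exact hvanZ _ (hWZmem (((pt l).1, b')) (mem_rowCols.mp hbD) hbE)
            exact vandermonde_row F.1 hWH (T.R (pt l).1)
              (((rowCols T (pt l).1).erase (pt l).2).image T.C)
              (by rw [hcardS]; omega) hvanS (T.C (pt l).2)
      · exact hvanZ _ (hWZmem pp hppD hEab)
    · intro hF
      funext l
      rw [hψap]
      have hmm : ptOf T (pt l.1) ∈ WX := hWXmem _ (hptD l.1)
      rcases mem_Kd.mp hF with ⟨-, hvanX⟩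
      exact hvanX _ hmm
  have hrn := LinearMap.finrank_range_add_finrank_ker ψ
  have hrange : Module.finrank k (LinearMap.range ψ) = Good.card := by
    rw [LinearMap.range_eq_top.mpr hsurj, finrank_top, Module.finrank_fintype_fun_eq_card,
      Fintype.card_coe]
  have hkerrk : Module.finrank k (LinearMap.ker ψ) = Module.finrank k (Kd WX dg) := by
    rw [hker]
    exact (Submodule.comapSubtypeEquivOfLe hKle).finrank_eq
  omega

lemma key_hilb (T : Staircase k) (h : ℕ) (pt : Fin h → ℕ × ℕ)
    (hmem : ∀ l, T.Interior (pt l).1 (pt l).2)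
    (hrow : ∀ l l', (pt l).1 = (pt l').1 → l = l')
    (hcol : ∀ l l', (pt l).2 = (pt l').2 → l = l')
    (q p : Fin h → ℕ)
    (hq : ∀ l, T.colCount (pt l).2 = q l + 1)
    (hp : ∀ l, T.rowCount (pt l).1 = p l + 1) (i j : ℕ) :
    (hilb (T.residual (Finset.univ.image pt)) i j : ℤ) =
      (hilb T.ideal i j : ℤ) -
        ((Finset.univ.filter (fun l : Fin h => q l ≤ i ∧ p l ≤ j)).card : ℤ) := by
  have h1 : hilb (T.residual (Finset.univ.image pt)) i j =
      Module.finrank k (weightedHomogeneousSubmodule k bw ((i, j) : ℕ × ℕ)) -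
        Module.finrank k (Kd ((T.D \ Finset.univ.image pt).image (fun p => (T.R p.1, T.C p.2)))
          ((i, j) : ℕ × ℕ)) := hilb_eq _ i j
  have h2 : hilb T.ideal i j =
      Module.finrank k (weightedHomogeneousSubmodule k bw ((i, j) : ℕ × ℕ)) -
        Module.finrank k (Kd T.pts ((i, j) : ℕ × ℕ)) := hilb_eq _ i j
  have h3 := key_dim T h pt hmem hrow hcol q p hq hp i j
  have h4 : Module.finrank k (Kd ((T.D \ Finset.univ.image pt).image
      (fun p => (T.R p.1, T.C p.2))) ((i, j) : ℕ × ℕ)) ≤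
      Module.finrank k (weightedHomogeneousSubmodule k bw ((i, j) : ℕ × ℕ)) :=
    finrank_le_of_le inf_le_left (WH_fd i j)
  omega

end
end Stmt14Aux

namespace Stmt14Aux
attribute [local instance] Classical.propDecidable
noncomputable section

variable {k : Type} [Field k]

lemma count_split {h : ℕ} (f : Fin h → ℕ) (A : Fin h → Prop) (i' : ℤ) :
    (Finset.univ.filter (fun l : Fin h => (f l : ℤ) ≤ i' ∧ A l)).card =
      (Finset.univ.filter (fun l : Fin h => (f l : ℤ) ≤ i' - 1 ∧ A l)).card +
      (Finset.univ.filter (fun l : Fin h => (f l : ℤ) = i' ∧ A l)).card := by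
  classical
  have hiff : ∀ l ∈ Finset.univ, (((f l : ℤ) ≤ i' ∧ A l) ↔
      ((((f l : ℤ) ≤ i' - 1 ∧ A l)) ∨ (((f l : ℤ) = i' ∧ A l)))) := by
    intro l _
    constructor
    · rintro ⟨h1, hA⟩
      by_cases he : (f l : ℤ) = i'
      · exact Or.inr ⟨he, hA⟩
      · exact Or.inl ⟨by omega, hA⟩
    · rintro (⟨h1, hA⟩ | ⟨h1, hA⟩)
      · exact ⟨by omega, hA⟩
      · exact ⟨by omega, hA⟩
  rw [Finset.filter_congr hiff, Finset.filter_or, Finset.card_union_of_disjoint]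
  rw [Finset.disjoint_left]
  intro a ha hb
  rw [Finset.mem_filter] at ha hb
  have h1 := ha.2.1
  have h2 := hb.2.1
  omega

lemma count_split' {h : ℕ} (f : Fin h → ℕ) (A : Fin h → Prop) (j' : ℤ) :
    (Finset.univ.filter (fun l : Fin h => A l ∧ (f l : ℤ) ≤ j')).card =
      (Finset.univ.filter (fun l : Fin h => A l ∧ (f l : ℤ) ≤ j' - 1)).card +
      (Finset.univ.filter (fun l : Fin h => A l ∧ (f l : ℤ) = j')).card := by
  classical
  have hiff : ∀ l ∈ Finset.univ, ((A l ∧ (f l : ℤ) ≤ j') ↔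
      (((A l ∧ (f l : ℤ) ≤ j' - 1)) ∨ ((A l ∧ (f l : ℤ) = j')))) := by
    intro l _
    constructor
    · rintro ⟨hA, h1⟩
      by_cases he : (f l : ℤ) = j'
      · exact Or.inr ⟨hA, he⟩
      · exact Or.inl ⟨hA, by omega⟩
    · rintro (⟨hA, h1⟩ | ⟨hA, h1⟩)
      · exact ⟨hA, by omega⟩
      · exact ⟨hA, by omega⟩
  rw [Finset.filter_congr hiff, Finset.filter_or, Finset.card_union_of_disjoint]
  rw [Finset.disjoint_left]
  intro a ha hb
  rw [Finset.mem_filter] at ha hb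
  have h1 := ha.2.2
  have h2 := hb.2.2
  omega

lemma HM_res (T : Staircase k) (h : ℕ) (pt : Fin h → ℕ × ℕ)
    (hmem : ∀ l, T.Interior (pt l).1 (pt l).2)
    (hrow : ∀ l l', (pt l).1 = (pt l').1 → l = l')
    (hcol : ∀ l l', (pt l).2 = (pt l').2 → l = l')
    (q p : Fin h → ℕ)
    (hq : ∀ l, T.colCount (pt l).2 = q l + 1)
    (hp : ∀ l, T.rowCount (pt l).1 = p l + 1) (i' j' : ℤ) :
    HM (T.residual (Finset.univ.image pt)) i' j' =
      HM T.ideal i' j' -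
        ((Finset.univ.filter (fun l : Fin h => (q l : ℤ) ≤ i' ∧ (p l : ℤ) ≤ j')).card : ℤ) := by
  by_cases hij : 0 ≤ i' ∧ 0 ≤ j'
  · rw [HM, if_pos hij, HM, if_pos hij]
    have hk := key_hilb T h pt hmem hrow hcol q p hq hp i'.toNat j'.toNat
    have hfe : (Finset.univ.filter (fun l : Fin h => q l ≤ i'.toNat ∧ p l ≤ j'.toNat)) =
        (Finset.univ.filter (fun l : Fin h => (q l : ℤ) ≤ i' ∧ (p l : ℤ) ≤ j')) := by
      apply Finset.filter_congr
      intro l _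
      have hi := hij.1
      have hj := hij.2
      constructor
      · rintro ⟨h1, h2⟩
        exact ⟨by omega, by omega⟩
      · rintro ⟨h1, h2⟩
        exact ⟨by omega, by omega⟩
    rw [hfe] at hk
    exact hk
  · rw [HM, if_neg hij, HM, if_neg hij]
    have : (Finset.univ.filter (fun l : Fin h => (q l : ℤ) ≤ i' ∧ (p l : ℤ) ≤ j')).card = 0 := by
      rw [Finset.card_eq_zero, Finset.filter_eq_empty_iff]
      intro l _
      rintro ⟨h1, h2⟩
      have hq0 : (0 : ℤ) ≤ (q l : ℤ) := Int.natCast_nonneg _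
      have hp0 : (0 : ℤ) ≤ (p l : ℤ) := Int.natCast_nonneg _
      omega
    rw [this]
    simp

end
end Stmt14Aux

open Stmt14Aux in
/-- ΔM_Z(i,j) = ΔM_X(i,j) − r_{ij} where r_{ij} counts the removed interior
points with (q_l,p_l) = (i,j). -/
theorem stmt14 (k : Type) [Field k] [IsAlgClosed k] (T : Staircase k)
    (h : ℕ) (pt : Fin h → ℕ × ℕ)
    (hmem : ∀ l, T.Interior (pt l).1 (pt l).2)
    (hrow : ∀ l l', (pt l).1 = (pt l').1 → l = l')
    (hcol : ∀ l l', (pt l).2 = (pt l').2 → l = l')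
    (q p : Fin h → ℕ)
    (hq : ∀ l, T.colCount (pt l).2 = q l + 1)
    (hp : ∀ l, T.rowCount (pt l).1 = p l + 1) :
    ∀ i j : ℕ,
      ΔH (T.residual (Finset.univ.image pt)) (i : ℤ) (j : ℤ) =
        ΔH T.ideal (i : ℤ) (j : ℤ) -
          ((Finset.univ.filter (fun l : Fin h => q l = i ∧ p l = j)).card : ℤ) := by
  classical
  intro i j
  have hHM := HM_res T h pt hmem hrow hcol q p hq hp
  rw [ΔH, ΔH, hHM i j, hHM ((i : ℤ) - 1) j, hHM (i : ℤ) ((j : ℤ) - 1),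
    hHM ((i : ℤ) - 1) ((j : ℤ) - 1)]
  have s1 := count_split q (fun l => (p l : ℤ) ≤ (j : ℤ)) (i : ℤ)
  have s2 := count_split q (fun l => (p l : ℤ) ≤ (j : ℤ) - 1) (i : ℤ)
  have s3 := count_split' p (fun l => (q l : ℤ) = (i : ℤ)) (j : ℤ)
  have hre : (Finset.univ.filter (fun l : Fin h => (q l : ℤ) = (i : ℤ) ∧ (p l : ℤ) = (j : ℤ)))
      = (Finset.univ.filter (fun l : Fin h => q l = i ∧ p l = j)) := by
    apply Finset.filter_congr
    intro l _
    constructor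
    · rintro ⟨h1, h2⟩
      exact ⟨by exact_mod_cast h1, by exact_mod_cast h2⟩
    · rintro ⟨h1, h2⟩
      exact ⟨by exact_mod_cast h1, by exact_mod_cast h2⟩
  have hre' : ((Finset.univ.filter (fun l : Fin h =>
      (q l : ℤ) = (i : ℤ) ∧ (p l : ℤ) = (j : ℤ))).card : ℤ)
      = ((Finset.univ.filter (fun l : Fin h => q l = i ∧ p l = j)).card : ℤ) := by
    exact_mod_cast congrArg Finset.card hre
  have s1' : ((Finset.univ.filter (fun l : Fin h => (q l : ℤ) ≤ (i:ℤ) ∧ (p l : ℤ) ≤ (j:ℤ))).card : ℤ) =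
      ((Finset.univ.filter (fun l : Fin h => (q l : ℤ) ≤ (i:ℤ) - 1 ∧ (p l : ℤ) ≤ (j:ℤ))).card : ℤ) +
      ((Finset.univ.filter (fun l : Fin h => (q l : ℤ) = (i:ℤ) ∧ (p l : ℤ) ≤ (j:ℤ))).card : ℤ) := by
    exact_mod_cast s1
  have s2' : ((Finset.univ.filter (fun l : Fin h => (q l : ℤ) ≤ (i:ℤ) ∧ (p l : ℤ) ≤ (j:ℤ) - 1)).card : ℤ) =
      ((Finset.univ.filter (fun l : Fin h => (q l : ℤ) ≤ (i:ℤ) - 1 ∧ (p l : ℤ) ≤ (j:ℤ) - 1)).card : ℤ) +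
      ((Finset.univ.filter (fun l : Fin h => (q l : ℤ) = (i:ℤ) ∧ (p l : ℤ) ≤ (j:ℤ) - 1)).card : ℤ) := by
    exact_mod_cast s2
  have s3' : ((Finset.univ.filter (fun l : Fin h => (q l : ℤ) = (i:ℤ) ∧ (p l : ℤ) ≤ (j:ℤ))).card : ℤ) =
      ((Finset.univ.filter (fun l : Fin h => (q l : ℤ) = (i:ℤ) ∧ (p l : ℤ) ≤ (j:ℤ) - 1)).card : ℤ) +
      ((Finset.univ.filter (fun l : Fin h => (q l : ℤ) = (i:ℤ) ∧ (p l : ℤ) = (j:ℤ))).card : ℤ) := by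
    exact_mod_cast s3
  linarith [s1', s2', s3', hre']
end
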